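/- arXiv:2203.16664 — 7 statements merged into one kernel-verified Lean document; each statement's English description precedes it below -/
import Mathlib

section
/- Let τ > 0, t ∈ ℝ, and let y : ℝ → ℝ be four times continuously differentiable. Then |(11y(t) − 18y(t−τ) + 9y(t−2τ) − 2y(t−3τ))/(6τ) − y'(t)| ≤ (9/4) · τ³ · sup_{s ∈ [t−3τ, t]} |y''''(s)|. -/
open Set

private lemma idw_eq_id {n : WithTop ℕ∞} {i : ℕ} {f : ℝ → ℝ} (hf : ContDiff ℝ n f)
    (hi : (i : WithTop ℕ∞) ≤ n) {s : Set ℝ} (hs : UniqueDiffOn ℝ s) {x : ℝ} (hx : x ∈ s) :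
    iteratedDerivWithin i f s x = iteratedDeriv i f x := by
  rw [iteratedDerivWithin_eq_iteratedFDerivWithin, iteratedDeriv_eq_iteratedFDeriv]
  have h : ContDiff ℝ (i : ℕ∞) f := by exact_mod_cast hf.of_le hi
  congr 1
  exact (((contDiff_iff_ftaylorSeries.mp h).hasFTaylorSeriesUpToOn
    s).eq_iteratedFDerivWithin_of_uniqueDiffOn le_rfl hs hx).symm

private lemma iter_reflect (y : ℝ → ℝ) (a b : ℝ) (n : ℕ) (x : ℝ) :
    iteratedDeriv n (fun s => y (a + b - s)) x =
      (-1 : ℝ) ^ n * iteratedDeriv n y (a + b - x) := by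
  calc iteratedDeriv n (fun s => y (a + b - s)) x
      = iteratedDeriv n (fun s => y (a + b + (-s))) x := by
        simp only [← sub_eq_add_neg]
    _ = (-1 : ℝ) ^ n • iteratedDeriv n (fun u => y (a + b + u)) (-x) :=
        iteratedDeriv_comp_neg n (fun u => y (a + b + u)) x
    _ = (-1 : ℝ) ^ n * iteratedDeriv n y (a + b - x) := by
        rw [iteratedDeriv_comp_const_add]
        norm_num [sub_eq_add_neg]

/-- Taylor expansion of order 3 around the right endpoint with Lagrange remainder. -/
private lemma taylor4_right (y : ℝ → ℝ) (hy : ContDiff ℝ 4 y) {a b : ℝ} (hab : a < b) :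
    ∃ ξ ∈ Set.Icc a b, y a =
      y b + iteratedDeriv 1 y b * (a - b) + iteratedDeriv 2 y b * (a - b) ^ 2 / 2
        + iteratedDeriv 3 y b * (a - b) ^ 3 / 6 + iteratedDeriv 4 y ξ * (a - b) ^ 4 / 24 := by
  set g : ℝ → ℝ := fun s => y (a + b - s) with hg_def
  have hg : ContDiff ℝ 4 g := hy.comp (contDiff_const.sub contDiff_id)
  have hs : UniqueDiffOn ℝ (Icc a b) := uniqueDiffOn_Icc hab
  have hf : ContDiffOn ℝ 3 g (Icc a b) := (hg.of_le (by norm_num)).contDiffOn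
  have hf' : DifferentiableOn ℝ (iteratedDerivWithin 3 g (Icc a b)) (Ioo a b) := by
    refine ((hg.differentiable_iteratedDeriv 3 (by norm_num)).differentiableOn).congr ?_
    intro x hx
    exact idw_eq_id hg (by norm_num) hs (Ioo_subset_Icc_self hx)
  obtain ⟨x', hx', H⟩ := taylor_mean_remainder_lagrange (f := g) (n := 3) hab.ne
    (by rwa [uIcc_of_le hab.le]) (by rwa [uIcc_of_le hab.le, uIoo_of_le hab.le])
  rw [uIoo_of_le hab.le] at hx'
  rw [uIcc_of_le hab.le] at H
  refine ⟨a + b - x', ⟨by linarith [hx'.2], by linarith [hx'.1]⟩, ?_⟩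
  have hgb : g b = y a := by simp [hg_def]
  have hmem : a ∈ Icc a b := left_mem_Icc.2 hab.le
  have hk0 : iteratedDerivWithin 0 g (Icc a b) a = y b := by
    rw [idw_eq_id hg (by norm_num) hs hmem]
    simp only [iteratedDeriv_zero, hg_def]
    norm_num
  have hk1 : iteratedDerivWithin 1 g (Icc a b) a = (-1 : ℝ) ^ 1 * iteratedDeriv 1 y b := by
    rw [idw_eq_id hg (by norm_num) hs hmem, iter_reflect]; ring_nf
  have hk2 : iteratedDerivWithin 2 g (Icc a b) a = (-1 : ℝ) ^ 2 * iteratedDeriv 2 y b := by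
    rw [idw_eq_id hg (by norm_num) hs hmem, iter_reflect]; ring_nf
  have hk3 : iteratedDerivWithin 3 g (Icc a b) a = (-1 : ℝ) ^ 3 * iteratedDeriv 3 y b := by
    rw [idw_eq_id hg (by norm_num) hs hmem, iter_reflect]; ring_nf
  have h4 : iteratedDerivWithin 4 g (Icc a b) x' = iteratedDeriv 4 y (a + b - x') := by
    rw [idw_eq_id hg le_rfl hs (Ioo_subset_Icc_self hx'), iter_reflect]; ring_nf
  rw [taylor_within_apply] at H
  simp only [Finset.sum_range_succ, Finset.sum_range_zero, smul_eq_mul] at H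
  norm_num [hk0, hk1, hk2, hk3, h4, hgb, Nat.factorial] at H
  rw [iteratedDeriv_one]
  linear_combination H

/-- The BDF-3 backward difference quotient `(11y(t) - 18y(t-τ) + 9y(t-2τ) - 2y(t-3τ))/(6τ)`
approximates `y'(t)` to third order in `τ`. -/
theorem bdf3_difference_quotient (τ t : ℝ) (hτ : 0 < τ) (y : ℝ → ℝ) (hy : ContDiff ℝ 4 y) :
    |(11 * y t - 18 * y (t - τ) + 9 * y (t - 2 * τ) - 2 * y (t - 3 * τ)) / (6 * τ) - deriv y t|
      ≤ 9 / 4 * τ ^ 3 * sSup ((fun s => |iteratedDeriv 4 y s|) '' Set.Icc (t - 3 * τ) t) := by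
  obtain ⟨ξ₁, hξ₁, h1⟩ := taylor4_right y hy (a := t - τ) (b := t) (by linarith)
  obtain ⟨ξ₂, hξ₂, h2⟩ := taylor4_right y hy (a := t - 2 * τ) (b := t) (by linarith)
  obtain ⟨ξ₃, hξ₃, h3⟩ := taylor4_right y hy (a := t - 3 * τ) (b := t) (by linarith)
  set M := sSup ((fun s => |iteratedDeriv 4 y s|) '' Set.Icc (t - 3 * τ) t) with hM
  have hcont : Continuous fun s => |iteratedDeriv 4 y s| :=
    (hy.continuous_iteratedDeriv 4 le_rfl).abs
  have hbdd : BddAbove ((fun s => |iteratedDeriv 4 y s|) '' Set.Icc (t - 3 * τ) t) :=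
    (isCompact_Icc.image hcont).bddAbove
  have hle : ∀ ξ ∈ Set.Icc (t - 3 * τ) t, |iteratedDeriv 4 y ξ| ≤ M := fun ξ hξ =>
    le_csSup hbdd ⟨ξ, hξ, rfl⟩
  have hA : |iteratedDeriv 4 y ξ₁| ≤ M :=
    hle ξ₁ ⟨by linarith [hξ₁.1], hξ₁.2⟩
  have hB : |iteratedDeriv 4 y ξ₂| ≤ M :=
    hle ξ₂ ⟨by linarith [hξ₂.1], hξ₂.2⟩
  have hC : |iteratedDeriv 4 y ξ₃| ≤ M :=
    hle ξ₃ ⟨by linarith [hξ₃.1], hξ₃.2⟩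
  set A := iteratedDeriv 4 y ξ₁
  set B := iteratedDeriv 4 y ξ₂
  set C := iteratedDeriv 4 y ξ₃
  have hd : iteratedDeriv 1 y t = deriv y t := by rw [iteratedDeriv_one]
  have key : (11 * y t - 18 * y (t - τ) + 9 * y (t - 2 * τ) - 2 * y (t - 3 * τ)) / (6 * τ)
      - deriv y t = τ ^ 3 * (-3 * A + 24 * B - 27 * C) / 24 := by
    rw [h1, h2, h3, ← hd]
    field_simp
    ring
  rw [key]
  have hM0 : 0 ≤ M := le_trans (abs_nonneg A) hA
  have h2' : |(-3 * A + 24 * B - 27 * C)| ≤ 3 * |A| + 24 * |B| + 27 * |C| := by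
    calc |(-3 * A + 24 * B - 27 * C)| ≤ |(-3 * A + 24 * B)| + |27 * C| := abs_sub _ _
      _ ≤ |(-3) * A| + |24 * B| + |27 * C| := by gcongr; exact abs_add_le _ _
      _ = 3 * |A| + 24 * |B| + 27 * |C| := by
          rw [abs_mul, abs_mul, abs_mul]; norm_num
  calc |τ ^ 3 * (-3 * A + 24 * B - 27 * C) / 24|
      = τ ^ 3 * |(-3 * A + 24 * B - 27 * C)| / 24 := by
        rw [abs_div, abs_mul, abs_of_nonneg (by positivity : (0:ℝ) ≤ τ ^ 3)]
        norm_num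
    _ ≤ τ ^ 3 * (3 * |A| + 24 * |B| + 27 * |C|) / 24 := by gcongr
    _ ≤ τ ^ 3 * (3 * M + 24 * M + 27 * M) / 24 := by gcongr
    _ = 9 / 4 * τ ^ 3 * M := by ring
end

section
/- Let M be a real symmetric positive definite n×n matrix, K a real symmetric positive definite m×m matrix, and D an arbitrary real n×m matrix. Set S := M⁻¹ · D · K⁻¹ · Dᵀ (an n×n matrix) and let N₂ be the 2n×2n block matrix with blocks [[−2S, S],[I, 0]] (I the n×n identity). Then: (i) every complex eigenvalue of S is real and nonnegative; (ii) the spectral radius of N₂ equals r + √(r² + r), where r is the spectral radius of S. -/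
open Matrix

lemma mem_spec_iff_det {k : Type*} [Fintype k] [DecidableEq k]
    (A : Matrix k k ℂ) (z : ℂ) :
    z ∈ spectrum ℂ A ↔ (z • (1 : Matrix k k ℂ) - A).det = 0 := by
  rw [spectrum.mem_iff, Algebra.algebraMap_eq_smul_one,
    Matrix.isUnit_iff_isUnit_det, isUnit_iff_ne_zero, not_ne_iff]

lemma spec_conj {k : Type*} [Fintype k] [DecidableEq k]
    (Q R A : Matrix k k ℂ) (hRQ : R * Q = 1) :
    spectrum ℂ (R * A * Q) = spectrum ℂ A := by
  have hdet : R.det * Q.det = 1 := by rw [← det_mul, hRQ, det_one]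
  ext z
  rw [mem_spec_iff_det, mem_spec_iff_det]
  have key : z • (1 : Matrix k k ℂ) - R * A * Q = R * (z • 1 - A) * Q := by
    rw [Matrix.mul_sub, Matrix.sub_mul, mul_smul_comm, smul_mul_assoc, mul_one, hRQ]
  rw [key, det_mul, det_mul,
    show R.det * (z • (1:Matrix k k ℂ) - A).det * Q.det
      = (z • (1:Matrix k k ℂ) - A).det * (R.det * Q.det) by ring,
    hdet, mul_one]

lemma map_mul_ofReal {k l o : Type*} [Fintype l] (A : Matrix k l ℝ) (B : Matrix l o ℝ) :
    (A * B).map Complex.ofReal = A.map Complex.ofReal * B.map Complex.ofReal :=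
  Matrix.map_mul (f := Complex.ofRealHom)

lemma map_one_ofReal {k : Type*} [Fintype k] [DecidableEq k] :
    (1 : Matrix k k ℝ).map Complex.ofReal = 1 :=
  Matrix.map_one _ Complex.ofReal_zero Complex.ofReal_one

lemma spec_map_hermitian {k : Type*} [Fintype k] [DecidableEq k]
    {A : Matrix k k ℝ} (hA : A.IsHermitian) :
    spectrum ℂ (A.map Complex.ofReal)
      = Complex.ofReal '' Set.range hA.eigenvalues := by
  set U : Matrix k k ℝ := (hA.eigenvectorUnitary : Matrix k k ℝ)
  have hUU : U * star U = 1 := Unitary.mul_star_self_of_mem hA.eigenvectorUnitary.2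
  have hst : A = U * diagonal (RCLike.ofReal ∘ hA.eigenvalues) * star U := hA.spectral_theorem
  have hmap : A.map Complex.ofReal
      = U.map Complex.ofReal * diagonal (Complex.ofReal ∘ hA.eigenvalues)
        * (star U).map Complex.ofReal := by
    conv_lhs => rw [hst]
    rw [map_mul_ofReal, map_mul_ofReal,
      Matrix.diagonal_map Complex.ofReal_zero]
    congr 2
  rw [hmap, spec_conj ((star U).map Complex.ofReal) (U.map Complex.ofReal) _
      (by rw [← map_mul_ofReal, hUU, map_one_ofReal]),
    spectrum_diagonal, Set.range_comp]

/-- For symmetric positive definite `M`, `K` and arbitrary `D`, with `S = M⁻¹ D K⁻¹ Dᵀ`: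
(i) every complex eigenvalue of `S` is real and nonnegative; (ii) the spectral radius of
the block matrix `N₂ = [[-2S, S], [I, 0]]` equals `r + √(r² + r)`, where `r` is the spectral
radius of `S`. -/
theorem spectral_radius_block_delay_matrix {n m : ℕ} (hn : 0 < n)
    (M : Matrix (Fin n) (Fin n) ℝ) (hM : M.PosDef)
    (K : Matrix (Fin m) (Fin m) ℝ) (hK : K.PosDef)
    (D : Matrix (Fin n) (Fin m) ℝ) :
    (∀ μ ∈ spectrum ℂ ((M⁻¹ * D * K⁻¹ * Dᵀ).map Complex.ofReal), μ.im = 0 ∧ 0 ≤ μ.re) ∧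
      ∃ r : ℝ,
        IsGreatest ((fun z : ℂ => ‖z‖) '' spectrum ℂ ((M⁻¹ * D * K⁻¹ * Dᵀ).map Complex.ofReal)) r ∧
        IsGreatest
          ((fun z : ℂ => ‖z‖) '' spectrum ℂ
            ((Matrix.fromBlocks (-(2 : ℝ) • (M⁻¹ * D * K⁻¹ * Dᵀ)) (M⁻¹ * D * K⁻¹ * Dᵀ)
                (1 : Matrix (Fin n) (Fin n) ℝ) 0).map Complex.ofReal))
          (r + Real.sqrt (r ^ 2 + r)) := by
  classical
  have hNE : Nonempty (Fin n) := ⟨⟨0, hn⟩⟩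
  set S := M⁻¹ * D * K⁻¹ * Dᵀ with hS
  -- B = D K⁻¹ Dᵀ is positive semidefinite
  have hB : (D * K⁻¹ * Dᵀ).PosSemidef := by
    have := (hK.inv).posSemidef.mul_mul_conjTranspose_same D
    rwa [conjTranspose_eq_transpose_of_trivial] at this
  open scoped MatrixOrder in set P := CFC.sqrt M with hPdef
  have hPP : P * P = M := by open scoped MatrixOrder in exact CFC.sqrt_mul_sqrt_self M hM.posSemidef.nonneg
  have hPH : P.IsHermitian := by open scoped MatrixOrder in exact (CFC.sqrt_nonneg M).posSemidef.isHermitian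
  have hPdet : IsUnit P.det := by
    rw [isUnit_iff_ne_zero]
    intro h
    have hMdet : M.det ≠ 0 := ne_of_gt hM.det_pos
    rw [← hPP, det_mul, h, mul_zero] at hMdet
    exact hMdet rfl
  have hPinv' : P⁻¹ * P = 1 := nonsing_inv_mul _ hPdet
  have hPt : P⁻¹ᵀ = P⁻¹ := by
    rw [transpose_nonsing_inv, ← conjTranspose_eq_transpose_of_trivial, hPH.eq]
  set A' := P⁻¹ * (D * K⁻¹ * Dᵀ) * P⁻¹ with hA'def
  have hA' : A'.PosSemidef := by
    have := hB.mul_mul_conjTranspose_same P⁻¹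
    rwa [conjTranspose_eq_transpose_of_trivial, hPt] at this
  have hSeq : S = P⁻¹ * A' * P := by
    have h1 : P⁻¹ * A' * P = P⁻¹ * P⁻¹ * (D * K⁻¹ * Dᵀ) * (P⁻¹ * P) := by
      rw [hA'def]; noncomm_ring
    rw [h1, hPinv', mul_one, hS, ← hPP, Matrix.mul_inv_rev]
    simp only [Matrix.mul_assoc]
  have hspecS : spectrum ℂ (S.map Complex.ofReal)
      = Complex.ofReal '' Set.range hA'.1.eigenvalues := by
    rw [hSeq, map_mul_ofReal, map_mul_ofReal,
      spec_conj (P.map Complex.ofReal) ((P⁻¹).map Complex.ofReal) _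
        (by rw [← map_mul_ofReal, hPinv', map_one_ofReal])]
    exact spec_map_hermitian hA'.1
  have heig0 : ∀ i, 0 ≤ hA'.1.eigenvalues i := hA'.eigenvalues_nonneg
  obtain ⟨i₀, hi₀⟩ := Finite.exists_max hA'.1.eigenvalues
  set r := hA'.1.eigenvalues i₀ with hrdef
  have hr0 : 0 ≤ r := heig0 i₀
  refine ⟨?_, r, ?_, ?_⟩
  · intro μ hμ
    rw [hspecS] at hμ
    obtain ⟨x, ⟨i, rfl⟩, rfl⟩ := hμ
    exact ⟨by simp, by simpa using heig0 i⟩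
  · constructor
    · exact ⟨(r : ℂ), by rw [hspecS]; exact ⟨r, ⟨i₀, rfl⟩, rfl⟩,
        by simp [Complex.norm_real, abs_of_nonneg hr0]⟩
    · rintro x ⟨μ, hμ, rfl⟩
      rw [hspecS] at hμ
      obtain ⟨_, ⟨i, rfl⟩, rfl⟩ := hμ
      simpa [Complex.norm_real, abs_of_nonneg (heig0 i)] using hi₀ i
  · set t := Real.sqrt (r ^ 2 + r) with htdef
    have ht0 : 0 ≤ t := Real.sqrt_nonneg _
    have ht2 : t ^ 2 = r ^ 2 + r := Real.sq_sqrt (by positivity)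
    set Sc := S.map Complex.ofReal with hScdef
    have hNc : (fromBlocks (-(2 : ℝ) • S) S (1 : Matrix (Fin n) (Fin n) ℝ) 0).map Complex.ofReal
        = fromBlocks ((-2 : ℂ) • Sc) Sc 1 0 := by
      have h2 : (-(2 : ℝ) • S).map Complex.ofReal = (-2 : ℂ) • Sc := by
        ext i j
        simp [Matrix.map_apply, Matrix.smul_apply, smul_eq_mul, hScdef]
      rw [fromBlocks_map, map_one_ofReal, Matrix.map_zero _ Complex.ofReal_zero, h2]
    rw [hNc]
    have key : ∀ z : ℂ,
        (z • (1 : Matrix (Fin n ⊕ Fin n) (Fin n ⊕ Fin n) ℂ) - fromBlocks ((-2 : ℂ) • Sc) Sc 1 0)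
          * fromBlocks (z • (1 : Matrix (Fin n) (Fin n) ℂ)) 0 1 1
        = fromBlocks (z ^ 2 • (1 : Matrix (Fin n) (Fin n) ℂ) + (2 * z - 1) • Sc) (-Sc) 0
            (z • (1 : Matrix (Fin n) (Fin n) ℂ)) := by
      intro z
      rw [← fromBlocks_one (l := Fin n) (m := Fin n) (α := ℂ), fromBlocks_smul,
        sub_eq_add_neg, fromBlocks_neg, fromBlocks_add, fromBlocks_multiply, fromBlocks_inj]
      refine ⟨?_, ?_, ?_, ?_⟩ <;>
        simp only [smul_zero, add_zero, zero_add, neg_zero, Matrix.add_mul, Matrix.neg_mul,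
          Matrix.zero_mul, Matrix.mul_zero, smul_mul_assoc, mul_smul_comm, Matrix.one_mul,
          Matrix.mul_one] <;>
        module
    constructor
    · -- membership: the value is attained at z₀ = -(r+t)
      have hrspec : (r : ℂ) ∈ spectrum ℂ Sc := by
        rw [hspecS]; exact ⟨r, ⟨i₀, rfl⟩, rfl⟩
      have hdet : ((r : ℂ) • (1 : Matrix (Fin n) (Fin n) ℂ) - Sc).det = 0 :=
        (mem_spec_iff_det _ _).mp hrspec
      obtain ⟨v, hv0, hv⟩ := (Matrix.exists_mulVec_eq_zero_iff).mpr hdet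
      have hSv : Sc *ᵥ v = (r : ℂ) • v := by
        rw [Matrix.sub_mulVec, Matrix.smul_mulVec, Matrix.one_mulVec, sub_eq_zero] at hv
        exact hv.symm
      set z₀ : ℝ := -(r + t) with hz₀def
      have hz₀re : z₀ ^ 2 + 2 * r * z₀ - r = 0 := by
        rw [hz₀def]; nlinarith [ht2]
      have hz₀eq : (z₀ : ℂ) ^ 2 + 2 * (r : ℂ) * z₀ - r = 0 := by exact_mod_cast hz₀re
      set w : (Fin n ⊕ Fin n) → ℂ := Sum.elim ((z₀ : ℂ) • v) v with hwdef
      have hw0 : w ≠ 0 := by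
        intro h
        apply hv0
        funext j
        exact congrFun h (Sum.inr j)
      have htop : ((-2 : ℂ) • Sc) *ᵥ ((z₀ : ℂ) • v) + Sc *ᵥ v = ((z₀ : ℂ) * z₀) • v := by
        rw [Matrix.smul_mulVec, Matrix.mulVec_smul, hSv, smul_smul, smul_smul, ← add_smul]
        congr 1
        linear_combination -hz₀eq
      have hbot : (1 : Matrix (Fin n) (Fin n) ℂ) *ᵥ ((z₀ : ℂ) • v)
          + (0 : Matrix (Fin n) (Fin n) ℂ) *ᵥ v = (z₀ : ℂ) • v := by
        rw [Matrix.one_mulVec, Matrix.zero_mulVec, add_zero]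
      have hwv : ((z₀ : ℂ) • (1 : Matrix (Fin n ⊕ Fin n) (Fin n ⊕ Fin n) ℂ)
          - fromBlocks ((-2 : ℂ) • Sc) Sc 1 0) *ᵥ w = 0 := by
        rw [Matrix.sub_mulVec, Matrix.smul_mulVec, Matrix.one_mulVec, hwdef,
          fromBlocks_mulVec]
        simp only [Sum.elim_comp_inl, Sum.elim_comp_inr]
        rw [htop, hbot]
        funext x
        cases x with
        | inl i => simp [smul_eq_mul, mul_assoc]
        | inr i => simp
      have hz₀spec : (z₀ : ℂ) ∈ spectrum ℂ
          (fromBlocks ((-2 : ℂ) • Sc) Sc 1 0 : Matrix (Fin n ⊕ Fin n) (Fin n ⊕ Fin n) ℂ) := by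
        exact (mem_spec_iff_det _ _).mpr
          ((Matrix.exists_mulVec_eq_zero_iff).mp ⟨w, hw0, hwv⟩)
      refine ⟨(z₀ : ℂ), hz₀spec, ?_⟩
      dsimp only
      rw [Complex.norm_real, Real.norm_eq_abs, hz₀def, abs_neg, abs_of_nonneg (by linarith)]
    · rintro x ⟨z, hz, rfl⟩
      rcases eq_or_ne z 0 with rfl | hz0
      · simp only [norm_zero]; positivity
      have hdet : (z • (1 : Matrix (Fin n ⊕ Fin n) (Fin n ⊕ Fin n) ℂ)
          - fromBlocks ((-2 : ℂ) • Sc) Sc 1 0).det = 0 := (mem_spec_iff_det _ _).mp hz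
      have hkey := congrArg Matrix.det (key z)
      rw [det_mul, hdet, zero_mul, det_fromBlocks_zero₂₁, det_smul, det_one, mul_one] at hkey
      have hXdet : (z ^ 2 • (1 : Matrix (Fin n) (Fin n) ℂ) + (2 * z - 1) • Sc).det = 0 := by
        rcases mul_eq_zero.mp hkey.symm with h | h
        · exact h
        · exact absurd h (pow_ne_zero _ hz0)
      rcases eq_or_ne (2 * z - 1) 0 with hc | hc
      · exfalso
        rw [hc, zero_smul, add_zero, det_smul, det_one, mul_one] at hXdet
        exact pow_ne_zero _ (pow_ne_zero 2 hz0) hXdet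
      set u : ℂ := -z ^ 2 / (2 * z - 1) with hudef
      have hcu : (2 * z - 1) * u = -z ^ 2 := by
        rw [hudef]; field_simp
      have hXu : z ^ 2 • (1 : Matrix (Fin n) (Fin n) ℂ) + (2 * z - 1) • Sc
          = (2 * z - 1) • (Sc - u • 1) := by
        rw [smul_sub, smul_smul, hcu]
        module
      rw [hXu, det_smul] at hXdet
      have hdet2 : (Sc - u • (1 : Matrix (Fin n) (Fin n) ℂ)).det = 0 := by
        rcases mul_eq_zero.mp hXdet with h | h
        · exact absurd h (pow_ne_zero _ hc)
        · exact h
      have huspec : u ∈ spectrum ℂ Sc := by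
        rw [mem_spec_iff_det,
          show u • (1 : Matrix (Fin n) (Fin n) ℂ) - Sc = -(Sc - u • 1) from (neg_sub _ _).symm,
          det_neg, hdet2, mul_zero]
      rw [hspecS] at huspec
      obtain ⟨μ', ⟨i, rfl⟩, hwμ⟩ := huspec
      set μ := hA'.1.eigenvalues i with hμdef
      have hμ0 : 0 ≤ μ := heig0 i
      have hμr : μ ≤ r := hi₀ i
      have hquad : z ^ 2 + 2 * (μ : ℂ) * z - μ = 0 := by
        rw [← hwμ] at hcu
        linear_combination hcu
      set s := Real.sqrt (μ ^ 2 + μ) with hsdef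
      have hs0 : 0 ≤ s := Real.sqrt_nonneg _
      have hs2 : s ^ 2 = μ ^ 2 + μ := Real.sq_sqrt (by positivity)
      have hs2' : (s : ℂ) ^ 2 = (μ : ℂ) ^ 2 + μ := by exact_mod_cast hs2
      have hfact : (z - (↑(-μ + s) : ℂ)) * (z - (↑(-μ - s) : ℂ)) = 0 := by
        push_cast
        linear_combination hquad - hs2'
      have hμs : μ + s ≤ r + t := by
        have hst : s ≤ t := by
          rw [hsdef, htdef]
          exact Real.sqrt_le_sqrt (by nlinarith)
        linarith
      rcases mul_eq_zero.mp hfact with h | h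
      · rw [sub_eq_zero] at h
        rw [h]; dsimp only; rw [Complex.norm_real, Real.norm_eq_abs]
        exact le_trans (abs_le.mpr ⟨by linarith, by linarith⟩) hμs
      · rw [sub_eq_zero] at h
        rw [h]; dsimp only; rw [Complex.norm_real, Real.norm_eq_abs]
        calc |(-μ - s)| = μ + s := by rw [abs_of_nonpos (by linarith)]; ring
          _ ≤ r + t := hμs
end

section
/- Let M be a real symmetric positive definite n×n matrix, K a real symmetric positive definite m×m matrix, and D an arbitrary real n×m matrix. Set S := M⁻¹ · D · K⁻¹ · Dᵀ and let N₂ be the 2n×2n block matrix with blocks [[−2S, S],[I, 0]]. Then the spectral radius of N₂ is strictly less than 1 if and only if the spectral radius of S is strictly less than 1/3. -/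
open Matrix

section Helpers

open ComplexOrder

lemma map_ofReal_mul {ι κ σ : Type*} [Fintype κ] (A : Matrix ι κ ℝ) (B : Matrix κ σ ℝ) :
    (A * B).map Complex.ofReal = (A.map Complex.ofReal) * (B.map Complex.ofReal) := by
  ext i j
  simp [Matrix.mul_apply, Matrix.map_apply]

lemma matrix_mem_spectrum_iff_exists {ι : Type*} [Fintype ι] [DecidableEq ι]
    (A : Matrix ι ι ℂ) (μ : ℂ) :
    μ ∈ spectrum ℂ A ↔ ∃ v, v ≠ 0 ∧ A *ᵥ v = μ • v := by
  rw [← AlgEquiv.spectrum_eq (Matrix.toLinAlgEquiv' (R := ℂ) (n := ι)) A,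
    ← Module.End.hasEigenvalue_iff_mem_spectrum, Module.End.hasEigenvalue_iff,
    Submodule.ne_bot_iff]
  constructor
  · rintro ⟨v, hv, hv0⟩
    exact ⟨v, hv0, by simpa [Matrix.toLinAlgEquiv'_apply, Matrix.toLin'_apply] using
      Module.End.mem_eigenspace_iff.mp hv⟩
  · rintro ⟨v, hv0, hv⟩
    exact ⟨v, Module.End.mem_eigenspace_iff.mpr (by simpa [Matrix.toLinAlgEquiv'_apply,
      Matrix.toLin'_apply] using hv), hv0⟩

lemma matrix_spectrum_nonempty {ι : Type*} [Fintype ι] [DecidableEq ι] [Nonempty ι]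
    (A : Matrix ι ι ℂ) : (spectrum ℂ A).Nonempty := by
  obtain ⟨c, hc⟩ := Module.End.exists_eigenvalue (Matrix.toLinAlgEquiv' A)
  exact ⟨c, (AlgEquiv.spectrum_eq Matrix.toLinAlgEquiv' A) ▸ hc.mem_spectrum⟩

lemma posSemidef_map_ofReal {ι : Type*} [Fintype ι] [DecidableEq ι] {A : Matrix ι ι ℝ}
    (h : A.PosSemidef) : (A.map Complex.ofReal).PosSemidef := by
  obtain ⟨B, rfl⟩ : ∃ B : Matrix ι ι ℝ, A = Bᴴ * B := by
    open scoped MatrixOrder in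
    obtain ⟨B, rfl⟩ := CStarAlgebra.nonneg_iff_eq_star_mul_self.mp h.nonneg
    exact ⟨B, rfl⟩
  have : (Bᴴ * B).map Complex.ofReal = (B.map Complex.ofReal)ᴴ * (B.map Complex.ofReal) := by
    rw [map_ofReal_mul,
      Matrix.conjTranspose_map Complex.ofReal (fun x => (Complex.conj_ofReal x).symm)]
  rw [this]
  exact Matrix.posSemidef_conjTranspose_mul_self _

lemma herm_dot_real {ι : Type*} [Fintype ι] {A : Matrix ι ι ℂ} (hA : A.IsHermitian)
    (v : ι → ℂ) : star v ⬝ᵥ A *ᵥ v = (((star v ⬝ᵥ A *ᵥ v).re : ℝ) : ℂ) := by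
  have hAij : ∀ i j, (starRingEnd ℂ) (A i j) = A j i := fun i j => by
    conv_rhs => rw [← hA]
    simp [conjTranspose_apply]
  rw [eq_comm, Complex.conj_eq_iff_re.mp]
  simp only [dotProduct, mulVec, map_sum, Finset.mul_sum]
  rw [Finset.sum_comm]
  refine Finset.sum_congr rfl fun i _ => Finset.sum_congr rfl fun j _ => ?_
  simp only [_root_.map_mul, Pi.star_apply, RCLike.star_def, Complex.conj_conj, hAij]
  ring

lemma spec_inv_mul_nonneg {ι : Type*} [Fintype ι] [DecidableEq ι] {M B : Matrix ι ι ℝ}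
    (hM : M.PosDef) (hB : B.PosSemidef) {μ : ℂ}
    (hμ : μ ∈ spectrum ℂ ((M⁻¹ * B).map Complex.ofReal)) : ∃ t : ℝ, 0 ≤ t ∧ μ = t := by
  obtain ⟨v, hv0, hv⟩ := (matrix_mem_spectrum_iff_exists _ _).mp hμ
  set Mc := M.map Complex.ofReal with hMc
  set Bc := B.map Complex.ofReal with hBc
  have hdet : IsUnit M.det := isUnit_iff_ne_zero.mpr hM.det_pos.ne'
  have hMB : Mc * ((M⁻¹ * B).map Complex.ofReal) = Bc := by
    rw [← map_ofReal_mul, ← Matrix.mul_assoc, Matrix.mul_nonsing_inv M hdet, Matrix.one_mul]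
  have key : Bc *ᵥ v = μ • (Mc *ᵥ v) := by
    rw [← hMB, ← Matrix.mulVec_mulVec, hv, Matrix.mulVec_smul]
  have hMcPSD : Mc.PosSemidef := posSemidef_map_ofReal hM.posSemidef
  have hBcPSD : Bc.PosSemidef := posSemidef_map_ofReal hB
  set p := star v ⬝ᵥ Mc *ᵥ v with hp
  set q := star v ⬝ᵥ Bc *ᵥ v with hq'
  have hq : q = μ * p := by
    rw [hq', key, dotProduct_smul, hp, smul_eq_mul]
  have hpreal : p = ((p.re : ℝ) : ℂ) := herm_dot_real hMcPSD.1 v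
  have hqreal : q = ((q.re : ℝ) : ℂ) := herm_dot_real hBcPSD.1 v
  have hpre : 0 ≤ p.re := hMcPSD.re_dotProduct_nonneg v
  have hqre : 0 ≤ q.re := hBcPSD.re_dotProduct_nonneg v
  have hMcdet : Mc.det = Complex.ofReal M.det := (RingHom.map_det Complex.ofRealHom M).symm
  have hMcUnit : IsUnit Mc := (Matrix.isUnit_iff_isUnit_det Mc).mpr (by
    rw [hMcdet]
    exact isUnit_iff_ne_zero.mpr (by exact_mod_cast hM.det_pos.ne'))
  have hpne : p ≠ 0 := by
    intro h0
    have : Mc *ᵥ v = 0 := (hMcPSD.dotProduct_mulVec_zero_iff v).mp h0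
    have : Mc *ᵥ v = Mc *ᵥ 0 := by rw [this, Matrix.mulVec_zero]
    exact hv0 (Matrix.mulVec_injective_iff_isUnit.mpr hMcUnit this)
  have hprepos : 0 < p.re := lt_of_le_of_ne hpre (by
    intro h; apply hpne; rw [hpreal, ← h]; simp)
  refine ⟨q.re / p.re, div_nonneg hqre hprepos.le, ?_⟩
  have : μ = q / p := by
    rw [hq, mul_div_assoc, div_self hpne, mul_one]
  rw [this, hpreal, hqreal, Complex.ofReal_div]
  simp

lemma spec_block_iff {ι : Type*} [Fintype ι] [DecidableEq ι] (Sc : Matrix ι ι ℂ) (lam : ℂ) :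
    lam ∈ spectrum ℂ (fromBlocks ((-2 : ℂ) • Sc) Sc (1 : Matrix ι ι ℂ) 0) ↔
      ∃ μ ∈ spectrum ℂ Sc, lam ^ 2 + 2 * μ * lam - μ = 0 := by
  rw [matrix_mem_spectrum_iff_exists]
  constructor
  · rintro ⟨w, hw0, hw⟩
    rw [fromBlocks_mulVec] at hw
    set x : ι → ℂ := w ∘ Sum.inl with hx
    set y : ι → ℂ := w ∘ Sum.inr with hy
    have h1 : ((-2:ℂ) • Sc) *ᵥ x + Sc *ᵥ y = lam • x := by
      funext i; exact congrFun hw (Sum.inl i)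
    have h2 : (1 : Matrix ι ι ℂ) *ᵥ x + (0 : Matrix ι ι ℂ) *ᵥ y = lam • y := by
      funext i; exact congrFun hw (Sum.inr i)
    rw [Matrix.one_mulVec, Matrix.zero_mulVec, add_zero] at h2
    have hyne : y ≠ 0 := by
      intro h0
      apply hw0
      have hx0 : x = 0 := by rw [h2, h0, smul_zero]
      funext i
      cases i with
      | inl i => exact congrFun hx0 i
      | inr i => exact congrFun h0 i
    rw [h2, Matrix.mulVec_smul, Matrix.smul_mulVec] at h1
    have h3 : ∀ i, (1 - 2 * lam) * (Sc *ᵥ y) i = lam ^ 2 * y i := by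
      intro i
      have h1i := congrFun h1 i
      simp only [Pi.add_apply, Pi.smul_apply, smul_eq_mul] at h1i
      linear_combination h1i
    by_cases hhalf : 1 - 2 * lam = 0
    · exfalso
      apply hyne
      have hlam : lam ≠ 0 := by intro h; rw [h] at hhalf; norm_num at hhalf
      funext i
      have h3i := h3 i
      rw [hhalf, zero_mul] at h3i
      have := mul_eq_zero.mp h3i.symm
      rcases this with h | h
      · exact absurd h (pow_ne_zero 2 hlam)
      · exact h
    · refine ⟨lam ^ 2 / (1 - 2 * lam), ?_, by
        rw [div_eq_mul_inv]; linear_combination (-(lam ^ 2)) * mul_inv_cancel₀ hhalf⟩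
      rw [matrix_mem_spectrum_iff_exists]
      refine ⟨y, hyne, ?_⟩
      funext i
      have h3i := h3 i
      simp only [Pi.smul_apply, smul_eq_mul]
      rw [div_eq_mul_inv]
      linear_combination (1 - 2 * lam)⁻¹ * h3i - (Sc *ᵥ y) i * mul_inv_cancel₀ hhalf
  · rintro ⟨μ, hμ, hroot⟩
    rw [matrix_mem_spectrum_iff_exists] at hμ
    obtain ⟨y, hy0, hy⟩ := hμ
    refine ⟨Sum.elim (lam • y) y, ?_, ?_⟩
    · intro h0
      apply hy0
      funext i
      exact congrFun h0 (Sum.inr i)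
    · rw [fromBlocks_mulVec, Sum.elim_comp_inl, Sum.elim_comp_inr]
      funext i
      cases i with
      | inl i =>
        simp only [Sum.elim_inl, Pi.add_apply, Pi.smul_apply, Matrix.mulVec_smul,
          Matrix.smul_mulVec, hy, smul_eq_mul]
        linear_combination -(y i) * hroot
      | inr i =>
        simp only [Sum.elim_inr, Pi.add_apply, Pi.smul_apply, Matrix.one_mulVec,
          Matrix.zero_mulVec, Pi.zero_apply, add_zero, smul_eq_mul]

end Helpers

/-- For symmetric positive definite `M`, `K` and arbitrary `D`, with `S = M⁻¹ D K⁻¹ Dᵀ` and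
`N₂ = [[-2S, S], [I, 0]]`, the spectral radius of `N₂` is strictly less than `1` if and only
if the spectral radius of `S` is strictly less than `1/3`. -/
theorem spectral_radius_block_lt_one_iff {n m : ℕ} (hn : 0 < n)
    (M : Matrix (Fin n) (Fin n) ℝ) (hM : M.PosDef)
    (K : Matrix (Fin m) (Fin m) ℝ) (hK : K.PosDef)
    (D : Matrix (Fin n) (Fin m) ℝ) :
    sSup ((fun z : ℂ => ‖z‖) '' spectrum ℂ
        ((Matrix.fromBlocks (-(2 : ℝ) • (M⁻¹ * D * K⁻¹ * Dᵀ)) (M⁻¹ * D * K⁻¹ * Dᵀ)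
            (1 : Matrix (Fin n) (Fin n) ℝ) 0).map Complex.ofReal)) < 1
      ↔ sSup ((fun z : ℂ => ‖z‖) '' spectrum ℂ ((M⁻¹ * D * K⁻¹ * Dᵀ).map Complex.ofReal)) < 1 / 3 := by
  have hι : Nonempty (Fin n) := Fin.pos_iff_nonempty.mp hn
  set S := M⁻¹ * D * K⁻¹ * Dᵀ with hS
  set Sc := S.map Complex.ofReal with hSc
  -- rewrite the mapped block matrix as a complex block matrix
  have hmap : ((Matrix.fromBlocks (-(2 : ℝ) • S) S (1 : Matrix (Fin n) (Fin n) ℝ) 0).map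
      Complex.ofReal) = fromBlocks ((-2 : ℂ) • Sc) Sc (1 : Matrix (Fin n) (Fin n) ℂ) 0 := by
    ext i j
    rcases i with i | i <;> rcases j with j | j <;>
      simp [Matrix.map_apply, Matrix.one_apply, apply_ite, Matrix.smul_apply, hSc, Matrix.map_apply, ← hS]
  rw [hmap]
  -- positive semidefiniteness of D * K⁻¹ * Dᵀ, and the eigenvalues of S are nonneg reals
  have hBpsd : (D * K⁻¹ * Dᵀ).PosSemidef := by
    have := hK.inv.posSemidef.mul_mul_conjTranspose_same D
    rwa [Matrix.conjTranspose_eq_transpose_of_trivial] at this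
  have hSeq : S = M⁻¹ * (D * K⁻¹ * Dᵀ) := by
    rw [hS]
    simp only [Matrix.mul_assoc]
  have hnonneg : ∀ μ ∈ spectrum ℂ Sc, ∃ t : ℝ, 0 ≤ t ∧ μ = t := by
    intro μ hμ
    exact spec_inv_mul_nonneg hM hBpsd (by rwa [← hSeq])
  -- reduce sSup to pointwise bounds
  have hfinN := Matrix.finite_spectrum (R := ℂ)
    (fromBlocks ((-2 : ℂ) • Sc) Sc (1 : Matrix (Fin n) (Fin n) ℂ) 0)
  have hfinS := Matrix.finite_spectrum (R := ℂ) Sc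
  have hneN : (spectrum ℂ
      (fromBlocks ((-2 : ℂ) • Sc) Sc (1 : Matrix (Fin n) (Fin n) ℂ) 0)).Nonempty :=
    matrix_spectrum_nonempty _
  have hneS : (spectrum ℂ Sc).Nonempty := matrix_spectrum_nonempty _
  rw [(hfinN.image _).csSup_lt_iff (hneN.image _),
    (hfinS.image _).csSup_lt_iff (hneS.image _)]
  simp only [Set.forall_mem_image]
  constructor
  · -- ρ(N₂) < 1 → ρ(S) < 1/3
    intro h μ hμ
    obtain ⟨t, ht0, rfl⟩ := hnonneg μ hμ
    set r := Real.sqrt (t ^ 2 + t) with hr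
    have hr0 : 0 ≤ r := Real.sqrt_nonneg _
    have hr2 : r ^ 2 = t ^ 2 + t := Real.sq_sqrt (by positivity)
    have hroot : ((-(t + r) : ℝ) : ℂ) ^ 2 + 2 * (t : ℂ) * ((-(t + r) : ℝ) : ℂ) - (t : ℂ) = 0 := by
      have : (-(t + r)) ^ 2 + 2 * t * (-(t + r)) - t = 0 := by linear_combination hr2
      exact_mod_cast congrArg (Complex.ofReal) this
    have hmem : ((-(t + r) : ℝ) : ℂ) ∈ spectrum ℂ
        (fromBlocks ((-2 : ℂ) • Sc) Sc (1 : Matrix (Fin n) (Fin n) ℂ) 0) :=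
      (spec_block_iff Sc _).mpr ⟨(t : ℂ), hμ, hroot⟩
    have habs := h hmem
    rw [Complex.norm_real, Real.norm_eq_abs, abs_of_nonpos (by linarith)] at habs
    rw [Complex.norm_real, Real.norm_eq_abs, abs_of_nonneg ht0]
    nlinarith [hr2, hr0, habs]
  · -- ρ(S) < 1/3 → ρ(N₂) < 1
    intro h lam hlam
    obtain ⟨μ, hμS, hroot⟩ := (spec_block_iff Sc lam).mp hlam
    obtain ⟨t, ht0, rfl⟩ := hnonneg μ hμS
    have habs := h hμS
    rw [Complex.norm_real, Real.norm_eq_abs, abs_of_nonneg ht0] at habs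
    set r := Real.sqrt (t ^ 2 + t) with hr
    have hr0 : 0 ≤ r := Real.sqrt_nonneg _
    have hr2 : r ^ 2 = t ^ 2 + t := Real.sq_sqrt (by positivity)
    have hr2c : ((r : ℂ)) ^ 2 = (t : ℂ) ^ 2 + (t : ℂ) := by exact_mod_cast congrArg Complex.ofReal hr2
    have hrlt : r < 1 - t := by
      rw [hr, Real.sqrt_lt' (by linarith)]
      nlinarith
    have hfact : (lam + t - r) * (lam + t + r) = 0 := by
      linear_combination hroot - hr2c
    rcases mul_eq_zero.mp hfact with hc | hc
    · have : lam = ((r - t : ℝ) : ℂ) := by push_cast; linear_combination hc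
      rw [this, Complex.norm_real, Real.norm_eq_abs, abs_sub_lt_iff]
      constructor <;> linarith
    · have : lam = ((-(t + r) : ℝ) : ℂ) := by push_cast; linear_combination hc
      rw [this, Complex.norm_real, Real.norm_eq_abs, abs_of_nonpos (by linarith)]
      linarith
end

section
/- Let V and Q be real Hilbert spaces, let A : V → V be a bounded linear bijection with bounded inverse, let D : V → Q be a bounded linear map with Hilbert-space adjoint D* : Q → V, let B, C : Q → Q be bounded linear maps, and let τ > 0. Let u_n ∈ V (n ≥ 0), p_n ∈ Q (n ≥ −2), f_n ∈ V (n ≥ 0), g_n ∈ Q (n ≥ 0) satisfy, for all n ≥ 0: A u_n = D*(2p_{n−1} − p_{n−2}) + f_n, and D(3u_{n+2} − 4u_{n+1} + u_n) + C(3p_{n+2} − 4p_{n+1} + p_n) + 2τ·B p_{n+2} = 2τ·g_{n+2}. Then for all n ≥ 0: C(3p_{n+2} − 4p_{n+1} + p_n) + 2τ·B p_{n+2} + D A⁻¹ D*(6p_{n+1} − 11p_n + 6p_{n−1} − p_{n−2}) = 2τ·g_{n+2} − D A⁻¹(3f_{n+2} − 4f_{n+1} + f_n). -/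
/-- Operator-level elimination identity of Section 3.4: eliminating the displacement iterates
from the semi-explicit second-order scheme yields the BDF-2 discretization of a parabolic
equation with two delays in the pressure variable alone. -/
theorem semiexplicit_elimination
    {V Q : Type*} [NormedAddCommGroup V] [InnerProductSpace ℝ V] [CompleteSpace V]
    [NormedAddCommGroup Q] [InnerProductSpace ℝ Q] [CompleteSpace Q]
    (A : V ≃L[ℝ] V) (D : V →L[ℝ] Q) (B C : Q →L[ℝ] Q) (τ : ℝ) (hτ : 0 < τ)
    (u f : ℕ → V) (p : ℤ → Q) (g : ℕ → Q)
    (hell : ∀ n : ℕ,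
      A (u n) = (ContinuousLinearMap.adjoint D) ((2 : ℝ) • p ((n : ℤ) - 1) - p ((n : ℤ) - 2))
        + f n)
    (hpar : ∀ n : ℕ,
      D ((3 : ℝ) • u (n + 2) - (4 : ℝ) • u (n + 1) + u n)
        + C ((3 : ℝ) • p ((n : ℤ) + 2) - (4 : ℝ) • p ((n : ℤ) + 1) + p (n : ℤ))
        + (2 * τ) • B (p ((n : ℤ) + 2))
      = (2 * τ) • g (n + 2)) :
    ∀ n : ℕ,
      C ((3 : ℝ) • p ((n : ℤ) + 2) - (4 : ℝ) • p ((n : ℤ) + 1) + p (n : ℤ))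
        + (2 * τ) • B (p ((n : ℤ) + 2))
        + D (A.symm ((ContinuousLinearMap.adjoint D)
            ((6 : ℝ) • p ((n : ℤ) + 1) - (11 : ℝ) • p (n : ℤ) + (6 : ℝ) • p ((n : ℤ) - 1)
              - p ((n : ℤ) - 2))))
      = (2 * τ) • g (n + 2)
        - D (A.symm ((3 : ℝ) • f (n + 2) - (4 : ℝ) • f (n + 1) + f n)) := by
  intro n
  have hu : ∀ m : ℕ, u m = A.symm ((ContinuousLinearMap.adjoint D)
      ((2 : ℝ) • p ((m : ℤ) - 1) - p ((m : ℤ) - 2)) + f m) := fun m => by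
    rw [← hell m, A.symm_apply_apply]
  have h := hpar n
  rw [hu (n+2), hu (n+1), hu n] at h
  have e1 : ((n+2 : ℕ) : ℤ) - 1 = (n : ℤ) + 1 := by push_cast; ring
  have e2 : ((n+2 : ℕ) : ℤ) - 2 = (n : ℤ) := by push_cast; ring
  have e3 : ((n+1 : ℕ) : ℤ) - 1 = (n : ℤ) := by push_cast; ring
  have e4 : ((n+1 : ℕ) : ℤ) - 2 = (n : ℤ) - 1 := by push_cast; ring
  rw [e1, e2, e3, e4] at h
  simp only [map_add, map_sub, map_smul] at h ⊢
  rw [← h]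
  module
end

section
/- Let H be a real Hilbert space, let b : H × H → ℝ be a symmetric bilinear form with b(x,x) ≥ 0 for all x, and let c̃ : H × H → ℝ be a symmetric bilinear form with 0 ≤ c̃(x,x) ≤ ω‖x‖² for all x, where 0 ≤ ω ≤ 1/5. Let 0 < τ ≤ 1, let e_n ∈ H for integers n ≥ −2 with e_{−2} = e_{−1} = e_0 = 0, and let d_n ∈ H for n ≥ 2. Assume that for all n ≥ 0 and all q ∈ H: ⟨3e_{n+2} − 4e_{n+1} + e_n, q⟩ + 2τ·b(e_{n+2}, q) + 2·c̃(3e_{n+1} − 4e_n + e_{n−1}, q) − c̃(3e_n − 4e_{n−1} + e_{n−2}, q) = 2τ·⟨d_{n+2}, q⟩. Then for all n ≥ 2: Σ_{j=2}^{n} ‖e_j − e_{j−1}‖² + 2τ·Σ_{j=2}^{n} b(e_j − e_{j−1}, e_j − e_{j−1}) + ‖e_n − e_{n−1}‖² + 2τ·b(e_n, e_n) ≤ 4τ·Σ_{j=2}^{n} ‖d_j‖² + 2‖e_1‖² + 2τ·b(e_1, e_1). -/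
open scoped RealInnerProductSpace
set_option maxHeartbeats 1000000 in

lemma step_abstract {H : Type*} [NormedAddCommGroup H] [InnerProductSpace ℝ H]
    (b ctil : H →ₗ[ℝ] H →ₗ[ℝ] ℝ)
    (hbsymm : ∀ x y, b x y = b y x)
    (hcsymm : ∀ x y, ctil x y = ctil y x)
    (ω : ℝ) (hω : ω ≤ 1 / 5)
    (hc : ∀ x, 0 ≤ ctil x x ∧ ctil x x ≤ ω * ‖x‖ ^ 2)
    (τ : ℝ) (hτ0 : 0 < τ) (hτ1 : τ ≤ 1)
    (a2 a1 a0 am1 am2 dd : H)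
    (heqn : ⟪(3 : ℝ) • a2 - (4 : ℝ) • a1 + a0, a2 - a1⟫
        + 2 * τ * b a2 (a2 - a1)
        + 2 * ctil ((3 : ℝ) • a1 - (4 : ℝ) • a0 + am1) (a2 - a1)
        - ctil ((3 : ℝ) • a0 - (4 : ℝ) • am1 + am2) (a2 - a1)
      = 2 * τ * ⟪dd, a2 - a1⟫) :
    79/50 * ‖a2 - a1‖^2 - 1/2 * ‖a1 - a0‖^2 - 1/3 * ‖a0 - am1‖^2 - 1/15 * ‖am1 - am2‖^2
      + τ * (b a2 a2 - b a1 a1) + τ * b (a2 - a1) (a2 - a1) ≤ 2 * τ * ‖dd‖^2 := by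
  have hc5 : ∀ x : H, ctil x x ≤ 1/5 * ⟪x, x⟫ := by
    intro x
    have h1 := (hc x).2
    rw [real_inner_self_eq_norm_sq]
    nlinarith [sq_nonneg ‖x‖]
  -- Young-type inequalities for the coupling form
  have hA : ctil ((a2 - a1) - (a1 - a0)) (a2 - a1)
      ≤ 5/12 * ctil ((a2 - a1) - (a1 - a0)) ((a2 - a1) - (a1 - a0)) + 3/5 * ctil (a2 - a1) (a2 - a1) := by
    have h0 := (hc ((5/6 : ℝ) • ((a2 - a1) - (a1 - a0)) - (a2 - a1))).1
    simp only [map_sub, map_smul, LinearMap.sub_apply, LinearMap.smul_apply, smul_eq_mul] at h0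
    have hs := hcsymm ((a2 - a1) - (a1 - a0)) (a2 - a1)
    simp only [map_sub, LinearMap.sub_apply] at hs ⊢
    linarith
  have hB : ctil (a0 - am1) (a2 - a1)
      ≤ 1/3 * ctil (a0 - am1) (a0 - am1) + 3/4 * ctil (a2 - a1) (a2 - a1) := by
    have h0 := (hc ((2/3 : ℝ) • (a0 - am1) - (a2 - a1))).1
    simp only [map_sub, map_smul, LinearMap.sub_apply, LinearMap.smul_apply, smul_eq_mul] at h0
    have hs := hcsymm (a0 - am1) (a2 - a1)
    simp only [map_sub, LinearMap.sub_apply] at hs ⊢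
    linarith
  have hD : -ctil (am1 - am2) (a2 - a1)
      ≤ 1/3 * ctil (am1 - am2) (am1 - am2) + 3/4 * ctil (a2 - a1) (a2 - a1) := by
    have h0 := (hc ((2/3 : ℝ) • (am1 - am2) + (a2 - a1))).1
    simp only [map_sub, map_add, map_smul, LinearMap.sub_apply, LinearMap.add_apply,
      LinearMap.smul_apply, smul_eq_mul] at h0
    have hs := hcsymm (am1 - am2) (a2 - a1)
    simp only [map_sub, LinearMap.sub_apply] at hs ⊢
    linarith
  -- identity for the inertia term
  have hI : ⟪(3 : ℝ) • a2 - (4 : ℝ) • a1 + a0, a2 - a1⟫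
      = 5/2 * ⟪a2 - a1, a2 - a1⟫ - 1/2 * ⟪a1 - a0, a1 - a0⟫
        + 1/2 * ⟪(a2 - a1) - (a1 - a0), (a2 - a1) - (a1 - a0)⟫ := by
    have h3 : (3 : ℝ) • a2 - (4 : ℝ) • a1 + a0 = (3 : ℝ) • (a2 - a1) - (a1 - a0) := by module
    rw [h3]
    simp only [inner_sub_left, inner_sub_right, real_inner_smul_left]
    linarith [real_inner_comm a1 a2, real_inner_comm a0 a2, real_inner_comm a0 a1]
  -- identity for the b-term
  have hBid : τ * (b a2 (a2 - a1) * 2) = τ * (b a2 a2 - b a1 a1 + b (a2 - a1) (a2 - a1)) := by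
    have : b a2 (a2 - a1) * 2 = b a2 a2 - b a1 a1 + b (a2 - a1) (a2 - a1) := by
      simp only [map_sub, LinearMap.sub_apply]
      rw [hbsymm a1 a2]
      ring
    rw [this]
  -- identity for the coupling terms
  have hCid : 2 * ctil ((3 : ℝ) • a1 - (4 : ℝ) • a0 + am1) (a2 - a1)
        - ctil ((3 : ℝ) • a0 - (4 : ℝ) • am1 + am2) (a2 - a1)
      = 6 * ctil (a2 - a1) (a2 - a1) - 6 * ctil ((a2 - a1) - (a1 - a0)) (a2 - a1)
        - 5 * ctil (a0 - am1) (a2 - a1) + ctil (am1 - am2) (a2 - a1) := by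
    have h4 : (3 : ℝ) • a1 - (4 : ℝ) • a0 + am1
        = (3 : ℝ) • (a2 - a1) - (3 : ℝ) • ((a2 - a1) - (a1 - a0)) - (a0 - am1) := by module
    have h5 : (3 : ℝ) • a0 - (4 : ℝ) • am1 + am2 = (3 : ℝ) • (a0 - am1) - (am1 - am2) := by module
    rw [h4, h5]
    simp only [map_sub, map_add, map_smul, LinearMap.sub_apply, LinearMap.add_apply,
      LinearMap.smul_apply, smul_eq_mul]
    ring
  -- bound for the right-hand side
  have hdd : 2 * τ * ⟪dd, a2 - a1⟫ ≤ 2 * τ * ‖dd‖^2 + 1/2 * ⟪a2 - a1, a2 - a1⟫ := by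
    have h0 : (0:ℝ) ≤ ⟪dd - (1/2 : ℝ) • (a2 - a1), dd - (1/2 : ℝ) • (a2 - a1)⟫ :=
      real_inner_self_nonneg
    simp only [inner_sub_left, inner_sub_right, real_inner_smul_left, real_inner_smul_right] at h0
    have hdd2 : ⟪dd, dd⟫ = ‖dd‖^2 := real_inner_self_eq_norm_sq dd
    have hcs : ⟪dd, a2 - a1⟫ ≤ ‖dd‖^2 + 1/4 * ⟪a2 - a1, a2 - a1⟫ := by
      simp only [inner_sub_left, inner_sub_right]
      linarith [real_inner_comm a2 dd, real_inner_comm a1 dd, real_inner_comm a1 a2]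
    have hI22 : (0:ℝ) ≤ ⟪a2 - a1, a2 - a1⟫ := real_inner_self_nonneg
    linarith [mul_le_mul_of_nonneg_left hcs hτ0.le,
      mul_nonneg (by linarith : (0:ℝ) ≤ 1 - τ) hI22]
  -- final combination
  rw [show ‖a2 - a1‖^2 = ⟪a2 - a1, a2 - a1⟫ from (real_inner_self_eq_norm_sq _).symm,
    show ‖a1 - a0‖^2 = ⟪a1 - a0, a1 - a0⟫ from (real_inner_self_eq_norm_sq _).symm,
    show ‖a0 - am1‖^2 = ⟪a0 - am1, a0 - am1⟫ from (real_inner_self_eq_norm_sq _).symm,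
    show ‖am1 - am2‖^2 = ⟪am1 - am2, am1 - am2⟫ from (real_inner_self_eq_norm_sq _).symm]
  have hq2 := hc5 (a2 - a1)
  have hq0 := hc5 (a0 - am1)
  have hqm1 := hc5 (am1 - am2)
  have hqΔ := hc5 ((a2 - a1) - (a1 - a0))
  linarith [heqn, hI, hBid, hCid, hA, hB, hD, hdd, hq2, hq0, hqm1, hqΔ]




/-- Step 1 of the proof of Theorem 4.2: auxiliary estimate for the differences of the errors
of the BDF-2 discretization of the neutral delay equation, under the weak coupling
condition `ω ≤ 1/5`. -/
theorem bdf2_delay_difference_estimate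
    {H : Type*} [NormedAddCommGroup H] [InnerProductSpace ℝ H] [CompleteSpace H]
    (b ctil : H →ₗ[ℝ] H →ₗ[ℝ] ℝ)
    (hbsymm : ∀ x y, b x y = b y x) (hbpos : ∀ x, 0 ≤ b x x)
    (hcsymm : ∀ x y, ctil x y = ctil y x)
    (ω : ℝ) (hω0 : 0 ≤ ω) (hω : ω ≤ 1 / 5)
    (hc : ∀ x, 0 ≤ ctil x x ∧ ctil x x ≤ ω * ‖x‖ ^ 2)
    (τ : ℝ) (hτ0 : 0 < τ) (hτ1 : τ ≤ 1)
    (e : ℤ → H) (hem2 : e (-2) = 0) (hem1 : e (-1) = 0) (he0 : e 0 = 0)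
    (d : ℕ → H)
    (heq : ∀ (n : ℕ) (q : H),
      ⟪(3 : ℝ) • e ((n : ℤ) + 2) - (4 : ℝ) • e ((n : ℤ) + 1) + e (n : ℤ), q⟫
        + 2 * τ * b (e ((n : ℤ) + 2)) q
        + 2 * ctil ((3 : ℝ) • e ((n : ℤ) + 1) - (4 : ℝ) • e (n : ℤ) + e ((n : ℤ) - 1)) q
        - ctil ((3 : ℝ) • e (n : ℤ) - (4 : ℝ) • e ((n : ℤ) - 1) + e ((n : ℤ) - 2)) q
      = 2 * τ * ⟪d (n + 2), q⟫) :
    ∀ n : ℕ, 2 ≤ n →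
      (∑ j ∈ Finset.Icc 2 n, ‖e (j : ℤ) - e ((j : ℤ) - 1)‖ ^ 2)
        + 2 * τ * (∑ j ∈ Finset.Icc 2 n,
            b (e (j : ℤ) - e ((j : ℤ) - 1)) (e (j : ℤ) - e ((j : ℤ) - 1)))
        + ‖e (n : ℤ) - e ((n : ℤ) - 1)‖ ^ 2 + 2 * τ * b (e (n : ℤ)) (e (n : ℤ))
      ≤ 4 * τ * (∑ j ∈ Finset.Icc 2 n, ‖d j‖ ^ 2) + 2 * ‖e 1‖ ^ 2 + 2 * τ * b (e 1) (e 1) := by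

  intro n hn
  -- per-step estimate in summand form
  have key2 : ∀ j : ℕ, 2 ≤ j →
      79/50 * ‖e (j : ℤ) - e ((j : ℤ) - 1)‖^2 - 1/2 * ‖e ((j : ℤ) - 1) - e ((j : ℤ) - 2)‖^2
        - 1/3 * ‖e ((j : ℤ) - 2) - e ((j : ℤ) - 3)‖^2 - 1/15 * ‖e ((j : ℤ) - 3) - e ((j : ℤ) - 4)‖^2
        + τ * (b (e (j : ℤ)) (e (j : ℤ)) - b (e ((j : ℤ) - 1)) (e ((j : ℤ) - 1)))
        + τ * b (e (j : ℤ) - e ((j : ℤ) - 1)) (e (j : ℤ) - e ((j : ℤ) - 1))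
      ≤ 2 * τ * ‖d j‖^2 := by
    intro j hj
    obtain ⟨m, rfl⟩ : ∃ m, j = m + 2 := ⟨j - 2, by omega⟩
    have hstep := step_abstract b ctil hbsymm hcsymm ω hω hc τ hτ0 hτ1
      (e ((m : ℤ) + 2)) (e ((m : ℤ) + 1)) (e (m : ℤ)) (e ((m : ℤ) - 1)) (e ((m : ℤ) - 2))
      (d (m + 2)) (heq m (e ((m : ℤ) + 2) - e ((m : ℤ) + 1)))
    push_cast
    simp only [show (m : ℤ) + 2 - 1 = (m : ℤ) + 1 from by ring,
      show (m : ℤ) + 2 - 2 = (m : ℤ) from by ring,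
      show (m : ℤ) + 2 - 3 = (m : ℤ) - 1 from by ring,
      show (m : ℤ) + 2 - 4 = (m : ℤ) - 2 from by ring]
    exact hstep
  -- shifted sums
  have S1 : ∀ n : ℕ, 2 ≤ n →
      (∑ j ∈ Finset.Icc 2 n, ‖e ((j : ℤ) - 1) - e ((j : ℤ) - 2)‖^2)
      = ‖e 1‖^2 + (∑ j ∈ Finset.Icc 2 n, ‖e (j : ℤ) - e ((j : ℤ) - 1)‖^2)
        - ‖e (n : ℤ) - e ((n : ℤ) - 1)‖^2 := by
    intro n hn
    induction n, hn using Nat.le_induction with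
    | base =>
      norm_num [Finset.Icc_self, he0]
    | succ n hn ih =>
      rw [Finset.sum_Icc_succ_top (by omega : 2 ≤ n + 1),
        Finset.sum_Icc_succ_top (by omega : 2 ≤ n + 1)]
      push_cast
      simp only [show (n : ℤ) + 1 - 1 = (n : ℤ) from by ring,
        show (n : ℤ) + 1 - 2 = (n : ℤ) - 1 from by ring]
      linarith
  have S2 : ∀ n : ℕ, 2 ≤ n →
      (∑ j ∈ Finset.Icc 2 n, ‖e ((j : ℤ) - 2) - e ((j : ℤ) - 3)‖^2)
      ≤ ‖e 1‖^2 + (∑ j ∈ Finset.Icc 2 n, ‖e (j : ℤ) - e ((j : ℤ) - 1)‖^2)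
        - ‖e (n : ℤ) - e ((n : ℤ) - 1)‖^2 - ‖e ((n : ℤ) - 1) - e ((n : ℤ) - 2)‖^2 := by
    intro n hn
    induction n, hn using Nat.le_induction with
    | base =>
      norm_num [Finset.Icc_self, he0, hem1]
    | succ n hn ih =>
      rw [Finset.sum_Icc_succ_top (by omega : 2 ≤ n + 1),
        Finset.sum_Icc_succ_top (by omega : 2 ≤ n + 1)]
      push_cast
      simp only [show (n : ℤ) + 1 - 1 = (n : ℤ) from by ring,
        show (n : ℤ) + 1 - 2 = (n : ℤ) - 1 from by ring,
        show (n : ℤ) + 1 - 3 = (n : ℤ) - 2 from by ring]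
      linarith
  have S3 : ∀ n : ℕ, 2 ≤ n →
      (∑ j ∈ Finset.Icc 2 n, ‖e ((j : ℤ) - 3) - e ((j : ℤ) - 4)‖^2)
      ≤ ‖e 1‖^2 + (∑ j ∈ Finset.Icc 2 n, ‖e (j : ℤ) - e ((j : ℤ) - 1)‖^2)
        - ‖e (n : ℤ) - e ((n : ℤ) - 1)‖^2 - ‖e ((n : ℤ) - 1) - e ((n : ℤ) - 2)‖^2
        - ‖e ((n : ℤ) - 2) - e ((n : ℤ) - 3)‖^2 := by
    intro n hn
    induction n, hn using Nat.le_induction with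
    | base =>
      norm_num [Finset.Icc_self, he0, hem1, hem2]
    | succ n hn ih =>
      rw [Finset.sum_Icc_succ_top (by omega : 2 ≤ n + 1),
        Finset.sum_Icc_succ_top (by omega : 2 ≤ n + 1)]
      push_cast
      simp only [show (n : ℤ) + 1 - 1 = (n : ℤ) from by ring,
        show (n : ℤ) + 1 - 2 = (n : ℤ) - 1 from by ring,
        show (n : ℤ) + 1 - 3 = (n : ℤ) - 2 from by ring,
        show (n : ℤ) + 1 - 4 = (n : ℤ) - 3 from by ring]
      linarith
  -- summed per-step estimate with telescoping b-term
  have SUMKEY : ∀ n : ℕ, 2 ≤ n →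
      (∑ j ∈ Finset.Icc 2 n,
        (79/50 * ‖e (j : ℤ) - e ((j : ℤ) - 1)‖^2 - 1/2 * ‖e ((j : ℤ) - 1) - e ((j : ℤ) - 2)‖^2
          - 1/3 * ‖e ((j : ℤ) - 2) - e ((j : ℤ) - 3)‖^2
          - 1/15 * ‖e ((j : ℤ) - 3) - e ((j : ℤ) - 4)‖^2))
      + τ * (b (e (n : ℤ)) (e (n : ℤ)) - b (e 1) (e 1))
      + τ * (∑ j ∈ Finset.Icc 2 n,
          b (e (j : ℤ) - e ((j : ℤ) - 1)) (e (j : ℤ) - e ((j : ℤ) - 1)))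
      ≤ 2 * τ * (∑ j ∈ Finset.Icc 2 n, ‖d j‖^2) := by
    intro n hn
    induction n, hn using Nat.le_induction with
    | base =>
      have h2 := key2 2 (le_refl 2)
      simp only [Finset.Icc_self, Finset.sum_singleton] at *
      have : ((2 : ℕ) : ℤ) - 1 = 1 := by norm_num
      rw [this] at h2 ⊢
      linarith
    | succ n hn ih =>
      have h2 := key2 (n + 1) (by omega)
      rw [Finset.sum_Icc_succ_top (by omega : 2 ≤ n + 1),
        Finset.sum_Icc_succ_top (by omega : 2 ≤ n + 1),
        Finset.sum_Icc_succ_top (by omega : 2 ≤ n + 1)]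
      push_cast at h2 ⊢
      simp only [show (n : ℤ) + 1 - 1 = (n : ℤ) from by ring] at h2 ⊢
      linarith
  -- conclusion
  have hK := SUMKEY n hn
  have h1 := S1 n hn
  have h2 := S2 n hn
  have h3 := S3 n hn
  have hsplit : (∑ j ∈ Finset.Icc 2 n,
        (79/50 * ‖e (j : ℤ) - e ((j : ℤ) - 1)‖^2 - 1/2 * ‖e ((j : ℤ) - 1) - e ((j : ℤ) - 2)‖^2
          - 1/3 * ‖e ((j : ℤ) - 2) - e ((j : ℤ) - 3)‖^2
          - 1/15 * ‖e ((j : ℤ) - 3) - e ((j : ℤ) - 4)‖^2))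
      = 79/50 * (∑ j ∈ Finset.Icc 2 n, ‖e (j : ℤ) - e ((j : ℤ) - 1)‖^2)
        - 1/2 * (∑ j ∈ Finset.Icc 2 n, ‖e ((j : ℤ) - 1) - e ((j : ℤ) - 2)‖^2)
        - 1/3 * (∑ j ∈ Finset.Icc 2 n, ‖e ((j : ℤ) - 2) - e ((j : ℤ) - 3)‖^2)
        - 1/15 * (∑ j ∈ Finset.Icc 2 n, ‖e ((j : ℤ) - 3) - e ((j : ℤ) - 4)‖^2) := by
    rw [Finset.mul_sum, Finset.mul_sum, Finset.mul_sum, Finset.mul_sum]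
    rw [← Finset.sum_sub_distrib, ← Finset.sum_sub_distrib, ← Finset.sum_sub_distrib]
  rw [hsplit] at hK
  have hSnn : (0:ℝ) ≤ ∑ j ∈ Finset.Icc 2 n, ‖e (j : ℤ) - e ((j : ℤ) - 1)‖^2 :=
    Finset.sum_nonneg fun j _ => sq_nonneg _
  have hNn : (0:ℝ) ≤ ‖e (n : ℤ) - e ((n : ℤ) - 1)‖^2 := sq_nonneg _
  have hN1 : (0:ℝ) ≤ ‖e ((n : ℤ) - 1) - e ((n : ℤ) - 2)‖^2 := sq_nonneg _
  have hN2 : (0:ℝ) ≤ ‖e ((n : ℤ) - 2) - e ((n : ℤ) - 3)‖^2 := sq_nonneg _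
  have hE : (0:ℝ) ≤ ‖e 1‖^2 := sq_nonneg _
  linarith
end

section
/- Let H be a real Hilbert space, let b : H × H → ℝ be a symmetric bilinear form with b(x,x) ≥ β‖x‖² for all x and some β > 0, and let c̃ : H × H → ℝ be a symmetric bilinear form with 0 ≤ c̃(x,x) ≤ ω‖x‖² for all x, where 0 ≤ ω ≤ 1/5. Let 0 < τ ≤ 1, let e_n ∈ H for integers n ≥ −2 with e_{−2} = e_{−1} = e_0 = 0, and let d_n ∈ H for n ≥ 2. Assume that for all n ≥ 0 and all q ∈ H: ⟨3e_{n+2} − 4e_{n+1} + e_n, q⟩ + 2τ·b(e_{n+2}, q) + 2·c̃(3e_{n+1} − 4e_n + e_{n−1}, q) − c̃(3e_n − 4e_{n−1} + e_{n−2}, q) = 2τ·⟨d_{n+2}, q⟩. Then there exists a constant C > 0, depending only on β, such that for all n ≥ 2: ‖e_n‖² + τ·Σ_{j=2}^{n} b(e_j, e_j) ≤ C·( τ·Σ_{j=2}^{n} ‖d_j‖² + ‖e_1‖² + τ·b(e_1, e_1) ). -/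
set_option maxHeartbeats 4000000

open scoped RealInnerProductSpace

universe u

section Aux
variable {H : Type u} [NormedAddCommGroup H] [InnerProductSpace ℝ H]

private lemma gid_bilin (φ : H →ₗ[ℝ] H →ₗ[ℝ] ℝ) (hsym : ∀ x y, φ x y = φ y x) (a b c : H) :
    φ ((3:ℝ) • a - (4:ℝ) • b + c) a
      = (φ a a + φ ((2:ℝ) • a - b) ((2:ℝ) • a - b)) / 2
        - (φ b b + φ ((2:ℝ) • b - c) ((2:ℝ) • b - c)) / 2
        + φ (a - (2:ℝ) • b + c) (a - (2:ℝ) • b + c) / 2 := by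
  simp only [map_add, map_sub, map_smul, LinearMap.add_apply, LinearMap.sub_apply,
    LinearMap.smul_apply, smul_eq_mul]
  linear_combination (2:ℝ) * hsym a b - (1/2:ℝ) * hsym a c

private lemma gid_inner (a b c : H) :
    ⟪(3:ℝ) • a - (4:ℝ) • b + c, a⟫
      = (‖a‖^2 + ‖(2:ℝ) • a - b‖^2) / 2 - (‖b‖^2 + ‖(2:ℝ) • b - c‖^2) / 2
        + ‖a - (2:ℝ) • b + c‖^2 / 2 := by
  simp only [← real_inner_self_eq_norm_sq]
  simp only [inner_add_left, inner_add_right, inner_sub_left, inner_sub_right,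
    real_inner_smul_left, real_inner_smul_right]
  linear_combination (-2:ℝ) * real_inner_comm a b + (1/2:ℝ) * real_inner_comm a c

private lemma cs_semidef (φ : H →ₗ[ℝ] H →ₗ[ℝ] ℝ) (hsym : ∀ x y, φ x y = φ y x)
    (ω : ℝ) (hω : 0 ≤ ω) (hnn : ∀ x, 0 ≤ φ x x) (hbd : ∀ x, φ x x ≤ ω * ‖x‖^2)
    (x y : H) : |φ x y| ≤ ω * ‖x‖ * ‖y‖ := by
  have key : ∀ t : ℝ, 0 ≤ (φ x x) * (t * t) + (2 * φ x y) * t + φ y y := by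
    intro t
    have h0 := hnn (t • x + y)
    simp only [map_add, map_smul, LinearMap.add_apply, LinearMap.smul_apply, smul_eq_mul] at h0
    rw [hsym y x] at h0
    nlinarith [h0]
  have hd : discrim (φ x x) (2 * φ x y) (φ y y) ≤ 0 := discrim_le_zero key
  simp only [discrim] at hd
  have h1 : (φ x y)^2 ≤ (φ x x) * (φ y y) := by nlinarith [hd]
  have h2 : (φ x x) * (φ y y) ≤ (ω * ‖x‖^2) * (ω * ‖y‖^2) :=
    mul_le_mul (hbd x) (hbd y) (hnn y) (by positivity)
  have h3 : (φ x y)^2 ≤ (ω * ‖x‖ * ‖y‖)^2 := by nlinarith [h1, h2]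
  have hpos : (0:ℝ) ≤ ω * ‖x‖ * ‖y‖ := by positivity
  have h4 := Real.sqrt_le_sqrt h3
  rwa [Real.sqrt_sq_eq_abs, Real.sqrt_sq hpos] at h4

private lemma sum_shift1 (f : ℤ → ℝ) : ∀ N : ℕ, 2 ≤ N →
    (∑ m ∈ Finset.Icc 2 N, f ((m:ℤ) - 1)) + f (N:ℤ)
      = f 1 + ∑ m ∈ Finset.Icc 2 N, f (m:ℤ) := by
  intro N hN
  induction N, hN using Nat.le_induction with
  | base => norm_num
  | succ N hN ih =>
    rw [Finset.sum_Icc_succ_top (by omega), Finset.sum_Icc_succ_top (by omega)]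
    have c1 : ((N+1:ℕ):ℤ) - 1 = (N:ℤ) := by push_cast; ring
    rw [c1]
    push_cast
    linarith [ih]

private lemma sum_shift2 (f : ℤ → ℝ) : ∀ N : ℕ, 2 ≤ N →
    (∑ m ∈ Finset.Icc 2 N, f ((m:ℤ) - 2)) + f ((N:ℤ) - 1) + f (N:ℤ)
      = f 0 + f 1 + ∑ m ∈ Finset.Icc 2 N, f (m:ℤ) := by
  intro N hN
  induction N, hN using Nat.le_induction with
  | base => norm_num
  | succ N hN ih =>
    rw [Finset.sum_Icc_succ_top (by omega), Finset.sum_Icc_succ_top (by omega)]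
    have c1 : ((N+1:ℕ):ℤ) - 2 = (N:ℤ) - 1 := by push_cast; ring
    have c2 : ((N+1:ℕ):ℤ) - 1 = (N:ℤ) := by push_cast; ring
    rw [c1, c2]
    push_cast
    linarith [ih]

private lemma sum_shiftA (f : ℤ → ℝ) : ∀ N : ℕ, 1 ≤ N →
    (∑ m ∈ Finset.Icc 1 N, f ((m:ℤ) - 1)) + f (N:ℤ)
      = f 0 + ∑ m ∈ Finset.Icc 1 N, f (m:ℤ) := by
  intro N hN
  induction N, hN using Nat.le_induction with
  | base => norm_num
  | succ N hN ih =>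
    rw [Finset.sum_Icc_succ_top (by omega), Finset.sum_Icc_succ_top (by omega)]
    have c1 : ((N+1:ℕ):ℤ) - 1 = (N:ℤ) := by push_cast; ring
    rw [c1]
    push_cast
    linarith [ih]

private lemma sum_bot (f : ℤ → ℝ) (N : ℕ) (hN : 1 ≤ N) :
    (∑ m ∈ Finset.Icc 1 N, f (m:ℤ)) = f 1 + ∑ m ∈ Finset.Icc 2 N, f (m:ℤ) := by
  rw [show Finset.Icc 1 N = insert 1 (Finset.Icc 2 N) from by
    ext a; simp only [Finset.mem_Icc, Finset.mem_insert]; omega,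
    Finset.sum_insert (by simp)]
  norm_num

end Aux

/-- Step 2 of the proof of Theorem 4.2: discrete stability estimate for the errors of the
BDF-2 discretization of the neutral delay equation, with a constant `C` depending only on
the ellipticity constant `β` of the form `b`, under the weak coupling condition `ω ≤ 1/5`. -/
theorem bdf2_delay_error_estimate (β : ℝ) (hβ : 0 < β) :
    ∃ C : ℝ, 0 < C ∧
      ∀ (H : Type u) [NormedAddCommGroup H] [InnerProductSpace ℝ H] [CompleteSpace H]
        (b ctil : H →ₗ[ℝ] H →ₗ[ℝ] ℝ),
        (∀ x y, b x y = b y x) → (∀ x : H, β * ‖x‖ ^ 2 ≤ b x x) →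
        (∀ x y, ctil x y = ctil y x) →
        ∀ ω : ℝ, 0 ≤ ω → ω ≤ 1 / 5 →
        (∀ x : H, 0 ≤ ctil x x ∧ ctil x x ≤ ω * ‖x‖ ^ 2) →
        ∀ τ : ℝ, 0 < τ → τ ≤ 1 →
        ∀ e : ℤ → H, e (-2) = 0 → e (-1) = 0 → e 0 = 0 →
        ∀ d : ℕ → H,
        (∀ (n : ℕ) (q : H),
          ⟪(3 : ℝ) • e ((n : ℤ) + 2) - (4 : ℝ) • e ((n : ℤ) + 1) + e (n : ℤ), q⟫
            + 2 * τ * b (e ((n : ℤ) + 2)) q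
            + 2 * ctil ((3 : ℝ) • e ((n : ℤ) + 1) - (4 : ℝ) • e (n : ℤ) + e ((n : ℤ) - 1)) q
            - ctil ((3 : ℝ) • e (n : ℤ) - (4 : ℝ) • e ((n : ℤ) - 1) + e ((n : ℤ) - 2)) q
          = 2 * τ * ⟪d (n + 2), q⟫) →
        ∀ n : ℕ, 2 ≤ n →
          ‖e (n : ℤ)‖ ^ 2 + τ * (∑ j ∈ Finset.Icc 2 n, b (e (j : ℤ)) (e (j : ℤ)))
            ≤ C * (τ * (∑ j ∈ Finset.Icc 2 n, ‖d j‖ ^ 2) + ‖e 1‖ ^ 2 + τ * b (e 1) (e 1)) := by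
  refine ⟨100 + 4/β, by positivity, ?_⟩
  intro H _ _ _ b ctil hb hcoer hcs ω hω hω5 hct τ hτ hτ1 e hem2 hem1 he0 d heq n hn
  -- local notation
  obtain ⟨dd, hdd⟩ : ∃ f : ℤ → H, f = (fun k : ℤ => (3:ℝ) • e k - (4:ℝ) • e (k-1) + e (k-2)) :=
    ⟨_, rfl⟩
  obtain ⟨dl, hdl⟩ : ∃ f : ℤ → H, f = (fun k : ℤ => e k - (2:ℝ) • e (k-1) + e (k-2)) := ⟨_, rfl⟩
  obtain ⟨gr, hgr⟩ : ∃ f : ℤ → H, f = (fun k : ℤ => e k - e (k-1)) := ⟨_, rfl⟩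
  obtain ⟨Af, hAf⟩ : ∃ f : ℤ → ℝ, f = (fun k : ℤ => ‖e k‖^2 + ‖(2:ℝ) • e k - e (k-1)‖^2) :=
    ⟨_, rfl⟩
  obtain ⟨At, hAt⟩ : ∃ f : ℤ → ℝ, f = (fun k : ℤ =>
      ctil (e k) (e k) + ctil ((2:ℝ) • e k - e (k-1)) ((2:ℝ) • e k - e (k-1))) := ⟨_, rfl⟩
  obtain ⟨Bf, hBf⟩ : ∃ f : ℤ → ℝ, f = (fun k : ℤ =>
      b (e k) (e k) + b ((2:ℝ) • e k - e (k-1)) ((2:ℝ) • e k - e (k-1))) := ⟨_, rfl⟩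
  obtain ⟨hf, hhf⟩ : ∃ f : ℤ → ℝ, f = (fun k : ℤ => ctil (dd k) (e k)) := ⟨_, rfl⟩
  -- basic facts
  have hbnn : ∀ x : H, 0 ≤ b x x := fun x => le_trans (by positivity) (hcoer x)
  have cs : ∀ x y : H, |ctil x y| ≤ ω * ‖x‖ * ‖y‖ :=
    fun x y => cs_semidef ctil hcs ω hω (fun z => (hct z).1) (fun z => (hct z).2) x y
  have hz : ∀ m : ℕ, 2 ≤ m → ∀ q : H,
      ⟪dd (m:ℤ), q⟫ + 2*τ*(b (e (m:ℤ))) q + 2*(ctil (dd ((m:ℤ)-1))) q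
        - (ctil (dd ((m:ℤ)-2))) q = 2*τ*⟪d m, q⟫ := by
    intro m hm q
    obtain ⟨k, rfl⟩ : ∃ k, m = k + 2 := ⟨m - 2, by omega⟩
    have c1 : ((k+2:ℕ):ℤ) = (k:ℤ) + 2 := by push_cast; ring
    have c2 : (k:ℤ) + 2 - 1 = (k:ℤ) + 1 := by ring
    have c3 : (k:ℤ) + 2 - 2 = (k:ℤ) := by ring
    have c4 : (k:ℤ) + 1 - 1 = (k:ℤ) := by ring
    have c5 : (k:ℤ) + 1 - 2 = (k:ℤ) - 1 := by ring
    simp only [hdd, c1, c2, c3, c4, c5]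
    linear_combination heq k q
  -- boundary values
  have hdd0 : dd 0 = 0 := by
    simp only [hdd, show (0:ℤ)-1 = -1 from by norm_num, show (0:ℤ)-2 = -2 from by norm_num,
      he0, hem1, hem2, smul_zero, sub_zero, add_zero]
  have hdd1 : dd 1 = (3:ℝ) • e 1 := by
    simp only [hdd, show (1:ℤ)-1 = 0 from by norm_num, show (1:ℤ)-2 = -1 from by norm_num,
      he0, hem1, smul_zero, sub_zero, add_zero]
  have hndd0 : ‖dd (0:ℤ)‖^2 = 0 := by rw [hdd0]; simp
  have hndd1 : ‖dd (1:ℤ)‖^2 = 9*‖e 1‖^2 := by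
    rw [hdd1, norm_smul]
    norm_num
    ring
  have hgr0 : gr 0 = 0 := by
    simp only [hgr, show (0:ℤ)-1 = -1 from by norm_num, he0, hem1, sub_zero]
  have hgr1 : gr 1 = e 1 := by
    simp only [hgr, show (1:ℤ)-1 = 0 from by norm_num, he0, sub_zero]
  have hAf0 : Af 0 = 0 := by
    simp only [hAf, show (0:ℤ)-1 = -1 from by norm_num, he0, hem1, smul_zero, sub_zero]
    simp
  have hAf1 : Af 1 = 5*‖e 1‖^2 := by
    simp only [hAf, show (1:ℤ)-1 = 0 from by norm_num, he0, sub_zero, norm_smul]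
    norm_num
    ring
  have hAt1 : At 1 = 5*(ctil (e 1) (e 1)) := by
    simp only [hAt, show (1:ℤ)-1 = 0 from by norm_num, he0, sub_zero, map_smul,
      LinearMap.smul_apply, smul_eq_mul]
    ring
  have hBf1 : Bf 1 = 5*(b (e 1) (e 1)) := by
    simp only [hBf, show (1:ℤ)-1 = 0 from by norm_num, he0, sub_zero, map_smul,
      LinearMap.smul_apply, smul_eq_mul]
    ring
  have hhf0 : hf 0 = 0 := by simp only [hhf, he0, map_zero]
  have hhf1 : 0 ≤ hf 1 := by
    simp only [hhf, hdd1, map_smul, LinearMap.smul_apply, smul_eq_mul]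
    linarith only [(hct (e 1)).1]
  have hAfnn : ∀ k : ℤ, 0 ≤ Af k := by intro k; simp only [hAf]; positivity
  have hAtnn : ∀ k : ℤ, 0 ≤ At k := by
    intro k; simp only [hAt]; exact add_nonneg (hct _).1 (hct _).1
  have hAtbd : ∀ k : ℤ, At k ≤ ω * Af k := by
    intro k
    simp only [hAt, hAf]
    have h1 := (hct (e k)).2
    have h2 := (hct ((2:ℝ) • e k - e (k-1))).2
    linarith only [h1, h2]
  have hBfnn : ∀ k : ℤ, 0 ≤ Bf k := by
    intro k; simp only [hBf]; exact add_nonneg (hbnn _) (hbnn _)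
  have hcdlnn : ∀ k : ℤ, 0 ≤ ctil (dl k) (dl k) := fun k => (hct _).1
  have hfgid : ∀ k : ℤ, hf k = At k/2 - At (k-1)/2 + ctil (dl k) (dl k)/2 := by
    intro k
    have g := gid_bilin ctil hcs (e k) (e (k-1)) (e (k-2))
    simp only [hhf, hdd, hAt, hdl, show k-1-1 = k-2 from by ring]
    linarith only [g]
  -- gradient recursion
  have hBm : ∀ k : ℤ, ‖gr k‖^2 ≤ (1/6)*‖gr (k-1)‖^2 + (1/3)*‖dd k‖^2 := by
    intro k
    have key : dd k + gr (k-1) = (3:ℝ) • gr k := by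
      simp only [hdd, hgr, show k-1-1 = k-2 from by ring]
      module
    have h1 : ‖(3:ℝ) • gr k‖ = 3*‖gr k‖ := by rw [norm_smul]; norm_num
    have h2 : ‖dd k + gr (k-1)‖ ≤ ‖dd k‖ + ‖gr (k-1)‖ := norm_add_le _ _
    have h3 : 3*‖gr k‖ ≤ ‖dd k‖ + ‖gr (k-1)‖ := by rw [← h1, ← key]; exact h2
    have h4 : 9*‖gr k‖^2 ≤ (‖dd k‖ + ‖gr (k-1)‖)^2 := by
      nlinarith [h3, norm_nonneg (gr k), norm_nonneg (dd k), norm_nonneg (gr (k-1))]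
    linarith only [h4, sq_nonneg (2*‖dd k‖ - ‖gr (k-1)‖)]
  -- per-step inequality, testing with dd m
  have hDm : ∀ m : ℕ, 2 ≤ m →
      ‖dd (m:ℤ)‖^2 + τ*(Bf (m:ℤ) - Bf ((m:ℤ)-1))
        ≤ 5*τ^2*‖d m‖^2 + (1/5)*‖dd (m:ℤ)‖^2
          + ω*(‖dd ((m:ℤ)-1)‖^2 + ‖dd (m:ℤ)‖^2)
          + (ω/2)*(‖dd ((m:ℤ)-2)‖^2 + ‖dd (m:ℤ)‖^2) := by
    intro m hm
    have E := hz m hm (dd (m:ℤ))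
    rw [real_inner_self_eq_norm_sq] at E
    have hBgid : (b (e (m:ℤ))) (dd (m:ℤ))
        = Bf (m:ℤ)/2 - Bf ((m:ℤ)-1)/2 + (b (dl (m:ℤ))) (dl (m:ℤ))/2 := by
      rw [hb (e (m:ℤ)) (dd (m:ℤ))]
      have g := gid_bilin b hb (e (m:ℤ)) (e ((m:ℤ)-1)) (e ((m:ℤ)-2))
      simp only [hdd, hBf, hdl, show (m:ℤ)-1-1 = (m:ℤ)-2 from by ring]
      linarith only [g]
    rw [hBgid] at E
    have hτb : 0 ≤ τ * ((b (dl (m:ℤ))) (dl (m:ℤ))) := mul_nonneg hτ.le (hbnn _)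
    have hip : ⟪d m, dd (m:ℤ)⟫ ≤ ‖d m‖ * ‖dd (m:ℤ)‖ := real_inner_le_norm _ _
    have hip2 : 2*τ*⟪d m, dd (m:ℤ)⟫ ≤ 2*τ*(‖d m‖ * ‖dd (m:ℤ)‖) := by
      have h0 := mul_le_mul_of_nonneg_left hip (show (0:ℝ) ≤ 2*τ by linarith only [hτ])
      linarith only [h0]
    have hY : 2*τ*(‖d m‖ * ‖dd (m:ℤ)‖) ≤ 5*τ^2*‖d m‖^2 + (1/5)*‖dd (m:ℤ)‖^2 := by
      linarith only [sq_nonneg (5*τ*‖d m‖ - ‖dd (m:ℤ)‖)]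
    have hc1 := (abs_le.mp (cs (dd ((m:ℤ)-1)) (dd (m:ℤ)))).1
    have hc2 := (abs_le.mp (cs (dd ((m:ℤ)-2)) (dd (m:ℤ)))).2
    have w1 : -(ω*(‖dd ((m:ℤ)-1)‖^2 + ‖dd (m:ℤ)‖^2)) ≤ 2*(ctil (dd ((m:ℤ)-1))) (dd (m:ℤ)) := by
      linarith only [hc1, mul_nonneg hω (sq_nonneg (‖dd ((m:ℤ)-1)‖ - ‖dd (m:ℤ)‖))]
    have w2 : (ctil (dd ((m:ℤ)-2))) (dd (m:ℤ)) ≤ (ω/2)*(‖dd ((m:ℤ)-2)‖^2 + ‖dd (m:ℤ)‖^2) := by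
      linarith only [hc2, mul_nonneg hω (sq_nonneg (‖dd ((m:ℤ)-2)‖ - ‖dd (m:ℤ)‖))]
    linarith only [E, hτb, hip2, hY, w1, w2]
  -- per-step inequality, testing with e m
  have hCm : ∀ m : ℕ, 2 ≤ m →
      (Af (m:ℤ) - Af ((m:ℤ)-1))/2 + ‖dl (m:ℤ)‖^2/2 + τ*((b (e (m:ℤ))) (e (m:ℤ)))
          + (2*hf ((m:ℤ)-1) - hf ((m:ℤ)-2))
        ≤ (τ/β)*‖d m‖^2 + ω*(‖dd ((m:ℤ)-1)‖^2 + ‖dd ((m:ℤ)-2)‖^2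
            + 2*‖gr (m:ℤ)‖^2 + 2*‖gr ((m:ℤ)-1)‖^2) := by
    intro m hm
    have E := hz m hm (e (m:ℤ))
    have hIgid : ⟪dd (m:ℤ), e (m:ℤ)⟫ = Af (m:ℤ)/2 - Af ((m:ℤ)-1)/2 + ‖dl (m:ℤ)‖^2/2 := by
      have g := gid_inner (e (m:ℤ)) (e ((m:ℤ)-1)) (e ((m:ℤ)-2))
      simp only [hdd, hAf, hdl, show (m:ℤ)-1-1 = (m:ℤ)-2 from by ring]
      linarith only [g]
    rw [hIgid] at E
    have hsplit1 : (ctil (dd ((m:ℤ)-1))) (e (m:ℤ))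
        = hf ((m:ℤ)-1) + (ctil (dd ((m:ℤ)-1))) (gr (m:ℤ)) := by
      have h1 : e (m:ℤ) = e ((m:ℤ)-1) + gr (m:ℤ) := by simp only [hgr]; abel
      rw [h1, map_add]
      simp only [hhf]
    have hsplit2 : (ctil (dd ((m:ℤ)-2))) (e (m:ℤ))
        = hf ((m:ℤ)-2) + (ctil (dd ((m:ℤ)-2))) (gr (m:ℤ))
          + (ctil (dd ((m:ℤ)-2))) (gr ((m:ℤ)-1)) := by
      have h1 : e (m:ℤ) = e ((m:ℤ)-2) + gr ((m:ℤ)-1) + gr (m:ℤ) := by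
        simp only [hgr, show (m:ℤ)-1-1 = (m:ℤ)-2 from by ring]
        abel
      rw [h1, map_add, map_add]
      simp only [hhf]
      ring
    rw [hsplit1, hsplit2] at E
    have hip : ⟪d m, e (m:ℤ)⟫ ≤ ‖d m‖ * ‖e (m:ℤ)‖ := real_inner_le_norm _ _
    have hY : 2*τ*⟪d m, e (m:ℤ)⟫ ≤ (τ/β)*‖d m‖^2 + τ*(β*‖e (m:ℤ)‖^2) := by
      have h0 : 2*τ*⟪d m, e (m:ℤ)⟫ ≤ 2*τ*(‖d m‖*‖e (m:ℤ)‖) := by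
        have := mul_le_mul_of_nonneg_left hip (show (0:ℝ) ≤ 2*τ by linarith only [hτ])
        linarith only [this]
      have h1 : (0:ℝ) ≤ τ/β := by positivity
      have h2 : 2*β*(‖d m‖*‖e (m:ℤ)‖) ≤ ‖d m‖^2 + β^2*‖e (m:ℤ)‖^2 := by
        linarith only [sq_nonneg (‖d m‖ - β*‖e (m:ℤ)‖)]
      have h3 := mul_le_mul_of_nonneg_left h2 h1
      have h4 : (τ/β)*(2*β*(‖d m‖*‖e (m:ℤ)‖)) = 2*τ*(‖d m‖*‖e (m:ℤ)‖) := by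
        field_simp
      have h5 : (τ/β)*(‖d m‖^2 + β^2*‖e (m:ℤ)‖^2)
          = (τ/β)*‖d m‖^2 + τ*(β*‖e (m:ℤ)‖^2) := by
        field_simp
      rw [h4, h5] at h3
      linarith only [h0, h3]
    have hcoe : τ*(β*‖e (m:ℤ)‖^2) ≤ τ*((b (e (m:ℤ))) (e (m:ℤ))) :=
      mul_le_mul_of_nonneg_left (hcoer _) hτ.le
    have w1 : -(ω*(‖dd ((m:ℤ)-1)‖^2 + ‖gr (m:ℤ)‖^2))
        ≤ 2*(ctil (dd ((m:ℤ)-1))) (gr (m:ℤ)) := by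
      linarith only [(abs_le.mp (cs (dd ((m:ℤ)-1)) (gr (m:ℤ)))).1,
        mul_nonneg hω (sq_nonneg (‖dd ((m:ℤ)-1)‖ - ‖gr (m:ℤ)‖))]
    have w2 : (ctil (dd ((m:ℤ)-2))) (gr (m:ℤ))
        ≤ (ω/2)*(‖dd ((m:ℤ)-2)‖^2 + ‖gr (m:ℤ)‖^2) := by
      linarith only [(abs_le.mp (cs (dd ((m:ℤ)-2)) (gr (m:ℤ)))).2,
        mul_nonneg hω (sq_nonneg (‖dd ((m:ℤ)-2)‖ - ‖gr (m:ℤ)‖))]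
    have w3 : (ctil (dd ((m:ℤ)-2))) (gr ((m:ℤ)-1))
        ≤ (ω/2)*(‖dd ((m:ℤ)-2)‖^2 + ‖gr ((m:ℤ)-1)‖^2) := by
      linarith only [(abs_le.mp (cs (dd ((m:ℤ)-2)) (gr ((m:ℤ)-1)))).2,
        mul_nonneg hω (sq_nonneg (‖dd ((m:ℤ)-2)‖ - ‖gr ((m:ℤ)-1)‖))]
    have hg1 : 0 ≤ ω*‖gr (m:ℤ)‖^2 := by positivity
    have hg2 : 0 ≤ ω*‖gr ((m:ℤ)-1)‖^2 := by positivity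
    have hd1 : 0 ≤ ω*‖dd ((m:ℤ)-2)‖^2 := by positivity
    linarith only [E, hY, hcoe, w1, w2, w3, hg1, hg2, hd1]
  -- the key one-step estimate
  have nnE1 : (0:ℝ) ≤ ‖e 1‖^2 := by positivity
  have nnτb1 : 0 ≤ τ*((b (e 1)) (e 1)) := mul_nonneg hτ.le (hbnn _)
  have bnd : ∀ X : ℝ, 0 ≤ X → ω*X ≤ (1/5)*X := by
    intro X hX
    linarith only [mul_le_mul_of_nonneg_right hω5 hX]
  have key : ∀ N : ℕ, 2 ≤ N →
      Af (N:ℤ)/2 + τ*(∑ m ∈ Finset.Icc 2 N, (b (e (m:ℤ))) (e (m:ℤ)))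
        ≤ (1/10)*Af ((N:ℤ)-2)
          + (25 + 1/β)*(τ*(∑ j ∈ Finset.Icc 2 N, ‖d j‖^2) + ‖e 1‖^2
              + τ*((b (e 1)) (e 1))) := by
    intro N hN
    have nnS : (0:ℝ) ≤ ∑ m ∈ Finset.Icc 2 N, ‖dd (m:ℤ)‖^2 :=
      Finset.sum_nonneg fun i _ => by positivity
    have nnS1 : (0:ℝ) ≤ ∑ m ∈ Finset.Icc 2 N, ‖dd ((m:ℤ)-1)‖^2 :=
      Finset.sum_nonneg fun i _ => by positivity
    have nnS2 : (0:ℝ) ≤ ∑ m ∈ Finset.Icc 2 N, ‖dd ((m:ℤ)-2)‖^2 :=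
      Finset.sum_nonneg fun i _ => by positivity
    have nnP : (0:ℝ) ≤ ∑ j ∈ Finset.Icc 2 N, ‖d j‖^2 :=
      Finset.sum_nonneg fun i _ => by positivity
    have nnTg0 : (0:ℝ) ≤ ∑ m ∈ Finset.Icc 2 N, ‖gr (m:ℤ)‖^2 :=
      Finset.sum_nonneg fun i _ => by positivity
    have nnTg1 : (0:ℝ) ≤ ∑ m ∈ Finset.Icc 2 N, ‖gr ((m:ℤ)-1)‖^2 :=
      Finset.sum_nonneg fun i _ => by positivity
    have nnSdl : (0:ℝ) ≤ ∑ m ∈ Finset.Icc 2 N, ‖dl (m:ℤ)‖^2 :=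
      Finset.sum_nonneg fun i _ => by positivity
    have nnScdl : (0:ℝ) ≤ ∑ m ∈ Finset.Icc 2 N, (ctil (dl (m:ℤ))) (dl (m:ℤ)) :=
      Finset.sum_nonneg fun i _ => hcdlnn _
    have nn_ddN : (0:ℝ) ≤ ‖dd (N:ℤ)‖^2 := by positivity
    have nn_ddN1 : (0:ℝ) ≤ ‖dd ((N:ℤ)-1)‖^2 := by positivity
    -- Step A : summed estimate from testing with dd m
    have SD0 := Finset.sum_le_sum (s := Finset.Icc 2 N)
      (f := fun m : ℕ => ‖dd (m:ℤ)‖^2 + τ*(Bf (m:ℤ) - Bf ((m:ℤ)-1)))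
      (g := fun m : ℕ => 5*τ^2*‖d m‖^2 + (1/5)*‖dd (m:ℤ)‖^2
            + ω*(‖dd ((m:ℤ)-1)‖^2 + ‖dd (m:ℤ)‖^2)
            + (ω/2)*(‖dd ((m:ℤ)-2)‖^2 + ‖dd (m:ℤ)‖^2))
      (fun m hm => hDm m (Finset.mem_Icc.mp hm).1)
    simp only [Finset.sum_add_distrib, Finset.sum_sub_distrib, ← Finset.mul_sum] at SD0
    have tBf := sum_shift1 Bf N hN
    have tBf' : τ*(∑ m ∈ Finset.Icc 2 N, Bf (m:ℤ)) - τ*(∑ m ∈ Finset.Icc 2 N, Bf ((m:ℤ)-1))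
        = τ*Bf (N:ℤ) - τ*Bf 1 := by linear_combination (-τ) * tBf
    have r4 := sum_shift1 (fun k => ‖dd k‖^2) N hN
    have r5 := sum_shift2 (fun k => ‖dd k‖^2) N hN
    have bS := bnd _ nnS
    have bS1 := bnd _ nnS1
    have bS2 := bnd _ nnS2
    have nnBfN : 0 ≤ τ*Bf (N:ℤ) := mul_nonneg hτ.le (hBfnn _)
    have hτBf1 : τ*Bf 1 = 5*(τ*((b (e 1)) (e 1))) := by rw [hBf1]; ring
    have hSA : (∑ m ∈ Finset.Icc 2 N, ‖dd (m:ℤ)‖^2)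
        ≤ 25*(τ*((b (e 1)) (e 1))) + 25*(τ^2*(∑ j ∈ Finset.Icc 2 N, ‖d j‖^2))
          + 14*‖e 1‖^2 := by
      linarith only [SD0, tBf', r4, r5, bS, bS1, bS2, nnBfN, hτBf1, hndd0, hndd1,
        nn_ddN, nn_ddN1, nnE1]
    -- Step B : summed gradient estimate
    have SB0 := Finset.sum_le_sum (s := Finset.Icc 1 N)
      (f := fun m : ℕ => ‖gr (m:ℤ)‖^2)
      (g := fun m : ℕ => (1/6)*‖gr ((m:ℤ)-1)‖^2 + (1/3)*‖dd (m:ℤ)‖^2)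
      (fun m _ => hBm (m:ℤ))
    simp only [Finset.sum_add_distrib, ← Finset.mul_sum] at SB0
    have tgA := sum_shiftA (fun k => ‖gr k‖^2) N (by omega)
    have tddbot := sum_bot (fun k => ‖dd k‖^2) N (by omega)
    have hgr0n : ‖gr (0:ℤ)‖^2 = 0 := by rw [hgr0]; simp
    have nngrN : (0:ℝ) ≤ ‖gr (N:ℤ)‖^2 := by positivity
    have hSB : (∑ m ∈ Finset.Icc 1 N, ‖gr (m:ℤ)‖^2)
        ≤ (2/5)*(9*‖e 1‖^2 + ∑ m ∈ Finset.Icc 2 N, ‖dd (m:ℤ)‖^2) := by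
      linarith only [SB0, tgA, tddbot, hgr0n, nngrN, hndd1]
    have tgbot := sum_bot (fun k => ‖gr k‖^2) N (by omega)
    have hgr1n : ‖gr (1:ℤ)‖^2 = ‖e 1‖^2 := by rw [hgr1]
    have tg1 := sum_shift1 (fun k => ‖gr k‖^2) N hN
    -- Step C : summed estimate from testing with e m
    have SC0 := Finset.sum_le_sum (s := Finset.Icc 2 N)
      (f := fun m : ℕ => (Af (m:ℤ) - Af ((m:ℤ)-1))/2 + ‖dl (m:ℤ)‖^2/2
          + τ*((b (e (m:ℤ))) (e (m:ℤ))) + (2*hf ((m:ℤ)-1) - hf ((m:ℤ)-2)))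
      (g := fun m : ℕ => (τ/β)*‖d m‖^2 + ω*(‖dd ((m:ℤ)-1)‖^2 + ‖dd ((m:ℤ)-2)‖^2
          + 2*‖gr (m:ℤ)‖^2 + 2*‖gr ((m:ℤ)-1)‖^2))
      (fun m hm => hCm m (Finset.mem_Icc.mp hm).1)
    simp only [Finset.sum_add_distrib, Finset.sum_sub_distrib, ← Finset.mul_sum,
      ← Finset.sum_div] at SC0
    have tAf := sum_shift1 Af N hN
    have th1 := sum_shift1 hf N hN
    have th2 := sum_shift2 hf N hN
    have tSh0 : (∑ m ∈ Finset.Icc 2 N, hf (m:ℤ))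
        = (∑ m ∈ Finset.Icc 2 N, At (m:ℤ))/2 - (∑ m ∈ Finset.Icc 2 N, At ((m:ℤ)-1))/2
          + (∑ m ∈ Finset.Icc 2 N, (ctil (dl (m:ℤ))) (dl (m:ℤ)))/2 := by
      have hcg : (∑ m ∈ Finset.Icc 2 N, hf (m:ℤ))
          = ∑ m ∈ Finset.Icc 2 N,
              (At (m:ℤ)/2 - At ((m:ℤ)-1)/2 + (ctil (dl (m:ℤ))) (dl (m:ℤ))/2) :=
        Finset.sum_congr rfl (fun m _ => hfgid (m:ℤ))
      rw [hcg]
      simp only [Finset.sum_add_distrib, Finset.sum_sub_distrib, ← Finset.sum_div]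
    have tAt := sum_shift1 At N hN
    have hfN := hfgid (N:ℤ)
    have hfN1 := hfgid ((N:ℤ)-1)
    rw [show (N:ℤ)-1-1 = (N:ℤ)-2 from by ring] at hfN1
    have singleN : (ctil (dl (N:ℤ))) (dl (N:ℤ))
        ≤ ∑ m ∈ Finset.Icc 2 N, (ctil (dl (m:ℤ))) (dl (m:ℤ)) :=
      Finset.single_le_sum (f := fun m : ℕ => (ctil (dl (m:ℤ))) (dl (m:ℤ)))
        (fun i _ => hcdlnn _) (Finset.mem_Icc.mpr ⟨hN, le_refl N⟩)
    have bT0 := bnd _ nnTg0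
    have bT1 := bnd _ nnTg1
    have hAt1b : At 1 ≤ ‖e 1‖^2 := by
      have h := hAtbd 1
      rw [hAf1] at h
      linarith only [h, mul_le_mul_of_nonneg_right hω5 nnE1]
    have hAtN2 : At ((N:ℤ)-2) ≤ (1/5)*Af ((N:ℤ)-2) := by
      have h := hAtbd ((N:ℤ)-2)
      linarith only [h, mul_le_mul_of_nonneg_right hω5 (hAfnn ((N:ℤ)-2))]
    have nnAtN1 : 0 ≤ At ((N:ℤ)-1) := hAtnn _
    have nncdlN1 : 0 ≤ (ctil (dl ((N:ℤ)-1))) (dl ((N:ℤ)-1)) := hcdlnn _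
    have hτ2P : τ^2*(∑ j ∈ Finset.Icc 2 N, ‖d j‖^2)
        ≤ τ*(∑ j ∈ Finset.Icc 2 N, ‖d j‖^2) := by
      have := mul_le_mul_of_nonneg_right hτ1 (mul_nonneg hτ.le nnP)
      linarith only [this]
    have nnτP : 0 ≤ τ*(∑ j ∈ Finset.Icc 2 N, ‖d j‖^2) := mul_nonneg hτ.le nnP
    have nnb1E1 : 0 ≤ (1/β)*‖e 1‖^2 := by positivity
    have nnb1τb1 : 0 ≤ (1/β)*(τ*((b (e 1)) (e 1))) := mul_nonneg (by positivity) nnτb1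
    have nnb1τP : 0 ≤ (1/β)*(τ*(∑ j ∈ Finset.Icc 2 N, ‖d j‖^2)) :=
      mul_nonneg (by positivity) nnτP
    -- stage the final assembly to keep each linear-arithmetic call small
    have hstep1 : -(At 1)/2 - At ((N:ℤ)-2)/2
        ≤ 2*(∑ m ∈ Finset.Icc 2 N, hf ((m:ℤ)-1)) - (∑ m ∈ Finset.Icc 2 N, hf ((m:ℤ)-2)) := by
      linarith only [th1, th2, tSh0, tAt, hfN, hfN1, hhf0, hhf1, nnAtN1, nncdlN1, singleN]
    have hstep2 : Af (N:ℤ)/2 + τ*(∑ m ∈ Finset.Icc 2 N, (b (e (m:ℤ))) (e (m:ℤ)))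
        ≤ Af 1/2 + At 1/2 + At ((N:ℤ)-2)/2
          + (τ/β)*(∑ j ∈ Finset.Icc 2 N, ‖d j‖^2)
          + ((1/5)*((∑ m ∈ Finset.Icc 2 N, ‖dd ((m:ℤ)-1)‖^2)
              + (∑ m ∈ Finset.Icc 2 N, ‖dd ((m:ℤ)-2)‖^2))
            + (2/5)*((∑ m ∈ Finset.Icc 2 N, ‖gr (m:ℤ)‖^2)
              + (∑ m ∈ Finset.Icc 2 N, ‖gr ((m:ℤ)-1)‖^2))) := by
      linarith only [SC0, tAf, hstep1, nnSdl, bS1, bS2, bT0, bT1]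
    have hstep4 : (∑ m ∈ Finset.Icc 2 N, ‖dd ((m:ℤ)-1)‖^2)
        ≤ 9*‖e 1‖^2 + (∑ m ∈ Finset.Icc 2 N, ‖dd (m:ℤ)‖^2) := by
      linarith only [r4, hndd1, nn_ddN]
    have hstep5 : (∑ m ∈ Finset.Icc 2 N, ‖dd ((m:ℤ)-2)‖^2)
        ≤ 9*‖e 1‖^2 + (∑ m ∈ Finset.Icc 2 N, ‖dd (m:ℤ)‖^2) := by
      linarith only [r5, hndd0, hndd1, nn_ddN, nn_ddN1]
    have hstep6 : (∑ m ∈ Finset.Icc 2 N, ‖gr (m:ℤ)‖^2)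
        ≤ ∑ m ∈ Finset.Icc 1 N, ‖gr (m:ℤ)‖^2 := by
      linarith only [tgbot, hgr1n, nnE1]
    have hstep7 : (∑ m ∈ Finset.Icc 2 N, ‖gr ((m:ℤ)-1)‖^2)
        ≤ ∑ m ∈ Finset.Icc 1 N, ‖gr (m:ℤ)‖^2 := by
      linarith only [tg1, tgbot, hgr1n, nngrN]
    have hstep8 : (1/5)*((∑ m ∈ Finset.Icc 2 N, ‖dd ((m:ℤ)-1)‖^2)
              + (∑ m ∈ Finset.Icc 2 N, ‖dd ((m:ℤ)-2)‖^2))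
            + (2/5)*((∑ m ∈ Finset.Icc 2 N, ‖gr (m:ℤ)‖^2)
              + (∑ m ∈ Finset.Icc 2 N, ‖gr ((m:ℤ)-1)‖^2))
        ≤ (34/5)*‖e 1‖^2 + (18/25)*(∑ m ∈ Finset.Icc 2 N, ‖dd (m:ℤ)‖^2) := by
      linarith only [hstep4, hstep5, hstep6, hstep7, hSB, nnE1]
    have hstep9 : (18/25)*(∑ m ∈ Finset.Icc 2 N, ‖dd (m:ℤ)‖^2)
        ≤ 18*(τ*((b (e 1)) (e 1))) + 18*(τ*(∑ j ∈ Finset.Icc 2 N, ‖d j‖^2))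
          + 11*‖e 1‖^2 := by
      linarith only [hSA, hτ2P, nnE1, nnτb1, nnτP]
    have hdist : (25 + 1/β)*(τ*(∑ j ∈ Finset.Icc 2 N, ‖d j‖^2) + ‖e 1‖^2
            + τ*((b (e 1)) (e 1)))
        = 25*(τ*(∑ j ∈ Finset.Icc 2 N, ‖d j‖^2)) + 25*‖e 1‖^2 + 25*(τ*((b (e 1)) (e 1)))
          + (1/β)*(τ*(∑ j ∈ Finset.Icc 2 N, ‖d j‖^2)) + (1/β)*‖e 1‖^2
          + (1/β)*(τ*((b (e 1)) (e 1))) := by ring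
    have hx : τ/β*(∑ j ∈ Finset.Icc 2 N, ‖d j‖^2)
        = (1/β)*(τ*(∑ j ∈ Finset.Icc 2 N, ‖d j‖^2)) := by ring
    linarith only [hdist, hx, hstep2, hstep8, hstep9, hAt1b, hAtN2, hAf1, nnE1, nnτb1,
      nnτP, nnb1E1, nnb1τb1, nnb1τP]
  -- main induction
  have main : ∀ N : ℕ, Af (N:ℤ)/2 + τ*(∑ m ∈ Finset.Icc 2 N, (b (e (m:ℤ))) (e (m:ℤ)))
      ≤ (50 + 2/β)*(τ*(∑ j ∈ Finset.Icc 2 N, ‖d j‖^2) + ‖e 1‖^2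
          + τ*((b (e 1)) (e 1))) := by
    intro N
    induction N using Nat.strong_induction_on with
    | _ N ih =>
      rcases Nat.lt_or_ge N 2 with hN2 | hN2
      · have hempty : Finset.Icc 2 N = ∅ := Finset.Icc_eq_empty (by omega)
        rw [hempty]
        simp only [Finset.sum_empty, mul_zero, add_zero, zero_add]
        have hc52 : (5/2:ℝ) ≤ 50 + 2/β := by
          have : (0:ℝ) < 2/β := by positivity
          linarith only [this]
        have hprod : (5/2:ℝ)*(‖e 1‖^2 + τ*((b (e 1)) (e 1)))
            ≤ (50 + 2/β)*(‖e 1‖^2 + τ*((b (e 1)) (e 1))) :=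
          mul_le_mul_of_nonneg_right hc52 (by linarith only [nnE1, nnτb1])
        interval_cases N
        · rw [show ((0:ℕ):ℤ) = 0 from rfl, hAf0]
          linarith only [hprod, nnE1, nnτb1]
        · rw [show ((1:ℕ):ℤ) = 1 from rfl, hAf1]
          linarith only [hprod, nnE1, nnτb1]
      · have hk := key N hN2
        have hc : ((N - 2:ℕ):ℤ) = (N:ℤ) - 2 := by omega
        have ih2 := ih (N-2) (by omega)
        rw [hc] at ih2
        have hmono : (∑ j ∈ Finset.Icc 2 (N-2), ‖d j‖^2)
            ≤ ∑ j ∈ Finset.Icc 2 N, ‖d j‖^2 :=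
          Finset.sum_le_sum_of_subset_of_nonneg (Finset.Icc_subset_Icc_right (by omega))
            (fun i _ _ => by positivity)
        have hRmono : (50 + 2/β)*(τ*(∑ j ∈ Finset.Icc 2 (N-2), ‖d j‖^2) + ‖e 1‖^2
              + τ*((b (e 1)) (e 1)))
            ≤ (50 + 2/β)*(τ*(∑ j ∈ Finset.Icc 2 N, ‖d j‖^2) + ‖e 1‖^2
              + τ*((b (e 1)) (e 1))) := by
          have h1 := mul_le_mul_of_nonneg_left hmono hτ.le
          exact mul_le_mul_of_nonneg_left (by linarith only [h1]) (by positivity)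
        have hSb2 : 0 ≤ ∑ m ∈ Finset.Icc 2 (N-2), (b (e (m:ℤ))) (e (m:ℤ)) :=
          Finset.sum_nonneg fun i _ => hbnn _
        have hτSb2 := mul_nonneg hτ.le hSb2
        have nnPN : (0:ℝ) ≤ ∑ j ∈ Finset.Icc 2 N, ‖d j‖^2 :=
          Finset.sum_nonneg fun i _ => by positivity
        have hRnnN : 0 ≤ τ*(∑ j ∈ Finset.Icc 2 N, ‖d j‖^2) + ‖e 1‖^2
            + τ*((b (e 1)) (e 1)) := by
          have h2 := mul_nonneg hτ.le nnPN
          linarith only [h2, nnE1, nnτb1]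
        have hfin : 0 ≤ (15 + (3/5)*(1/β)) * (τ*(∑ j ∈ Finset.Icc 2 N, ‖d j‖^2)
            + ‖e 1‖^2 + τ*((b (e 1)) (e 1))) := mul_nonneg (by positivity) hRnnN
        have hcomb : (50 + 2/β)*(τ*(∑ j ∈ Finset.Icc 2 N, ‖d j‖^2) + ‖e 1‖^2
                + τ*((b (e 1)) (e 1)))
            = (1/5)*((50 + 2/β)*(τ*(∑ j ∈ Finset.Icc 2 N, ‖d j‖^2) + ‖e 1‖^2
                + τ*((b (e 1)) (e 1))))
              + (25 + 1/β)*(τ*(∑ j ∈ Finset.Icc 2 N, ‖d j‖^2) + ‖e 1‖^2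
                + τ*((b (e 1)) (e 1)))
              + (15 + (3/5)*(1/β)) * (τ*(∑ j ∈ Finset.Icc 2 N, ‖d j‖^2)
                + ‖e 1‖^2 + τ*((b (e 1)) (e 1))) := by ring
        linarith only [hk, ih2, hRmono, hτSb2, hfin, hcomb]
  -- conclusion
  have hAfn : ‖e (n:ℤ)‖^2 ≤ Af (n:ℤ) := by
    have h : Af (n:ℤ) = ‖e (n:ℤ)‖^2 + ‖(2:ℝ) • e (n:ℤ) - e ((n:ℤ)-1)‖^2 := by rw [hAf]
    linarith only [h, sq_nonneg ‖(2:ℝ) • e (n:ℤ) - e ((n:ℤ)-1)‖]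
  have hm := main n
  have hSbn : 0 ≤ ∑ m ∈ Finset.Icc 2 n, (b (e (m:ℤ))) (e (m:ℤ)) :=
    Finset.sum_nonneg fun i _ => hbnn _
  have hτSbn := mul_nonneg hτ.le hSbn
  have hcomb2 : (100 + 4/β)*(τ*(∑ j ∈ Finset.Icc 2 n, ‖d j‖^2) + ‖e 1‖^2
          + τ*((b (e 1)) (e 1)))
      = 2*((50 + 2/β)*(τ*(∑ j ∈ Finset.Icc 2 n, ‖d j‖^2) + ‖e 1‖^2
          + τ*((b (e 1)) (e 1)))) := by ring
  linarith only [hm, hAfn, hτSbn, hcomb2]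
end

section
/- Let V, Q, H be real Hilbert spaces and let ι : Q → H be an injective bounded linear map. Let a : V × V → ℝ be a symmetric bounded bilinear form with a(v,v) ≥ c_a‖v‖_V² (c_a > 0), let b : Q × Q → ℝ be a symmetric bounded bilinear form with b(q,q) ≥ c_b‖q‖_Q² (c_b > 0), let c : H × H → ℝ be a symmetric bounded bilinear form with c(h,h) ≥ c_c‖h‖_H² (c_c > 0), and let d : V × H → ℝ be a bilinear form with |d(v,h)| ≤ C_d‖v‖_V‖h‖_H. Let τ > 0, T > 0, let f : [0,T] → V* be continuously differentiable and g : [0,T] → Q* arbitrary. Suppose u, ũ : [0,T] → V are continuously differentiable, p : [0,T] → Q and p̃ : [−2τ, T] → Q are such that ι∘p is continuously differentiable and ι∘p̃ is three times continuously differentiable, and that for all t ∈ [0,T], all v ∈ V and all q ∈ Q: (i) a(u(t),v) − d(v, ι p(t)) = f(t)(v) and d(u'(t), ιq) + c((ι∘p)'(t), ιq) + b(p(t), q) = g(t)(q); (ii) a(ũ(t),v) − d(v, 2·ι p̃(t−τ) − ι p̃(t−2τ)) = f(t)(v) and d(ũ'(t), ιq) + c((ι∘p̃)'(t), ιq) +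 b(p̃(t), q) = g(t)(q). Assume the history consistency conditions p̃(0) = p(0) and 2·p̃(−τ) − p̃(−2τ) = p(0). Then there exists a constant C > 0, depending only on the ellipticity and continuity constants of a, b, c, d, such that for all t ∈ [0,T]: ‖p̃(t) − p(t)‖_Q² + ‖ũ(t) − u(t)‖_V² ≤ C·t·τ⁴·( M₂² + M₃² ), where M_j := sup_{s ∈ [−2τ,T]} ‖(ι∘p̃)^{(j)}(s)‖_H. -/
open Set Filter

universe u v w

section auxlemmas

variable {E F : Type*} [NormedAddCommGroup E] [NormedSpace ℝ E]
  [NormedAddCommGroup F] [NormedSpace ℝ F]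

lemma bilin_hasDerivWithinAt (B : E →ₗ[ℝ] F →ₗ[ℝ] ℝ) {CB : ℝ}
    (hB : ∀ x y, |B x y| ≤ CB * ‖x‖ * ‖y‖)
    {f : ℝ → E} {g : ℝ → F} {f' : E} {g' : F} {s : Set ℝ} {t : ℝ}
    (hf : HasDerivWithinAt f f' s t) (hg : HasDerivWithinAt g g' s t) :
    HasDerivWithinAt (fun τ => B (f τ) (g τ)) (B f' (g t) + B (f t) g') s t := by
  set Bc : E →L[ℝ] F →L[ℝ] ℝ := LinearMap.mkContinuous₂ B CB (fun x y => by
    simpa [Real.norm_eq_abs] using hB x y) with hBc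
  have h1 : HasDerivWithinAt (fun τ => Bc (f τ)) (Bc f') s t :=
    (Bc.hasFDerivAt).comp_hasDerivWithinAt t hf
  have h2 := h1.clm_apply hg
  simpa [hBc, LinearMap.mkContinuous₂_apply] using h2

lemma bilin_tendsto (B : E →ₗ[ℝ] F →ₗ[ℝ] ℝ) {CB : ℝ}
    (hB : ∀ x y, |B x y| ≤ CB * ‖x‖ * ‖y‖)
    {α : Type*} {l : Filter α} {f : α → E} {g : α → F} {Lf : E} {Lg : F}
    (hf : Filter.Tendsto f l (nhds Lf)) (hg : Filter.Tendsto g l (nhds Lg)) :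
    Filter.Tendsto (fun s => B (f s) (g s)) l (nhds (B Lf Lg)) := by
  set Bc : E →L[ℝ] F →L[ℝ] ℝ := LinearMap.mkContinuous₂ B CB (fun x y => by
    simpa [Real.norm_eq_abs] using hB x y) with hBc
  have hcont : Continuous (fun p : (F →L[ℝ] ℝ) × F => p.1 p.2) :=
    isBoundedBilinearMap_apply.continuous
  have h1 : Filter.Tendsto (fun s => ((Bc (f s) : F →L[ℝ] ℝ), g s)) l
      (nhds (Bc Lf, Lg)) :=
    ((Bc.continuous.tendsto Lf).comp hf).prodMk_nhds hg
  have := (hcont.tendsto (Bc Lf, Lg)).comp h1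
  simpa [hBc, LinearMap.mkContinuous₂_apply, Function.comp_def] using this

lemma iteratedDerivWithin_subset'' {f : ℝ → E} {s t : Set ℝ} (hst : s ⊆ t)
    (hs : UniqueDiffOn ℝ s) (ht : UniqueDiffOn ℝ t) {n N : ℕ}
    (hf : ContDiffOn ℝ (N : ℕ∞) f t) (hmn : n ≤ N) :
    ∀ x ∈ s, iteratedDerivWithin n f s x = iteratedDerivWithin n f t x := by
  induction n with
  | zero => intro x hx; simp
  | succ n IH =>
    intro x hx
    have hn : n ≤ N := Nat.le_of_succ_le hmn
    have hdiff : DifferentiableWithinAt ℝ (iteratedDerivWithin n f t) t x := by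
      have : (n : WithTop ℕ∞) < (N : ℕ∞) := by
        exact_mod_cast Nat.lt_of_lt_of_le (Nat.lt_succ_self n) hmn
      exact (hf.differentiableOn_iteratedDerivWithin this ht) x (hst hx)
    rw [iteratedDerivWithin_succ, iteratedDerivWithin_succ]
    rw [derivWithin_congr (fun y hy => IH hn y hy) (IH hn x hx)]
    exact derivWithin_subset hst (hs x hx) hdiff

lemma taylor1 {f : ℝ → E} {A B M : ℝ} (hAB : A < B) {NN : ℕ} (hNN : 2 ≤ NN)
    (hf : ContDiffOn ℝ ((NN:ℕ) : ℕ∞) f (Set.Icc A B))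
    (hM : ∀ y ∈ Set.Icc A B, ‖iteratedDerivWithin 2 f (Set.Icc A B) y‖ ≤ M)
    {a b : ℝ} (hA : A ≤ a) (hab : a < b) (hB : b ≤ B) :
    ‖f b - f a - (b - a) • derivWithin f (Set.Icc A B) a‖ ≤ M * (b - a) ^ 2 := by
  have hsub : Set.Icc a b ⊆ Set.Icc A B := Set.Icc_subset_Icc hA hB
  have hUs : UniqueDiffOn ℝ (Set.Icc a b) := uniqueDiffOn_Icc hab
  have hUt : UniqueDiffOn ℝ (Set.Icc A B) := uniqueDiffOn_Icc hAB
  have haab : a ∈ Set.Icc a b := Set.left_mem_Icc.2 hab.le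
  have hC : ∀ y ∈ Set.Icc a b, ‖iteratedDerivWithin 2 f (Set.Icc a b) y‖ ≤ M := by
    intro y hy
    rw [iteratedDerivWithin_subset'' hsub hUs hUt hf hNN y hy]
    exact hM y (hsub hy)
  have hf2 : ContDiffOn ℝ ((1:ℕ) + 1) f (Set.Icc a b) := by
    have : ContDiffOn ℝ ((2:ℕ) : ℕ∞) f (Set.Icc a b) :=
      (hf.mono hsub).of_le (by exact_mod_cast hNN)
    exact_mod_cast this
  have h := taylor_mean_remainder_bound (n := 1) hab.le hf2 (Set.right_mem_Icc.2 hab.le) hC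
  have hexp : taylorWithinEval f 1 (Set.Icc a b) a b
      = f a + (b - a) • derivWithin f (Set.Icc a b) a := by
    simp [taylorWithinEval_succ, taylor_within_zero_eval,
      iteratedDerivWithin_one]
  have hder : derivWithin f (Set.Icc a b) a = derivWithin f (Set.Icc A B) a := by
    refine derivWithin_subset hsub (hUs a haab) ?_
    exact (hf.differentiableOn (by exact_mod_cast (by omega : NN ≠ 0))) a (hsub haab)
  rw [hexp, hder] at h
  rw [sub_sub]
  calc ‖f b - (f a + (b - a) • derivWithin f (Set.Icc A B) a)‖
      ≤ M * (b - a) ^ (1 + 1) / (Nat.factorial 1) := h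
    _ = M * (b - a) ^ 2 := by norm_num

end auxlemmas

set_option maxHeartbeats 4000000 in
/-- Theorem 3.2: the solution `(ũ, p̃)` of the poroelastic system with two delays (pressure in
the elliptic equation replaced by the extrapolation `2p̃(t-τ) - p̃(t-2τ)`) differs from the
solution `(u, p)` of the coupled system only by a term of order `τ²`, with a constant depending
only on the ellipticity and continuity constants of the bilinear forms `a`, `b`, `c`, `d`. -/
theorem delay_system_second_order_approximation
    (c_a C_a c_b C_b c_c C_c C_d : ℝ) (hca : 0 < c_a) (hcb : 0 < c_b) (hcc : 0 < c_c) :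
    ∃ C : ℝ, 0 < C ∧
      ∀ (V : Type u) (Q : Type v) (H : Type w)
        [NormedAddCommGroup V] [InnerProductSpace ℝ V] [CompleteSpace V]
        [NormedAddCommGroup Q] [InnerProductSpace ℝ Q] [CompleteSpace Q]
        [NormedAddCommGroup H] [InnerProductSpace ℝ H] [CompleteSpace H]
        (ι : Q →L[ℝ] H), Function.Injective ι →
      ∀ a : V →ₗ[ℝ] V →ₗ[ℝ] ℝ, (∀ v w, a v w = a w v) →
        (∀ v : V, c_a * ‖v‖ ^ 2 ≤ a v v) → (∀ v w : V, |a v w| ≤ C_a * ‖v‖ * ‖w‖) →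
      ∀ b : Q →ₗ[ℝ] Q →ₗ[ℝ] ℝ, (∀ q r, b q r = b r q) →
        (∀ q : Q, c_b * ‖q‖ ^ 2 ≤ b q q) → (∀ q r : Q, |b q r| ≤ C_b * ‖q‖ * ‖r‖) →
      ∀ c : H →ₗ[ℝ] H →ₗ[ℝ] ℝ, (∀ x y, c x y = c y x) →
        (∀ x : H, c_c * ‖x‖ ^ 2 ≤ c x x) → (∀ x y : H, |c x y| ≤ C_c * ‖x‖ * ‖y‖) →
      ∀ d : V →ₗ[ℝ] H →ₗ[ℝ] ℝ, (∀ (v : V) (x : H), |d v x| ≤ C_d * ‖v‖ * ‖x‖) →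
      ∀ τ T : ℝ, 0 < τ → 0 < T →
      ∀ f : ℝ → V →L[ℝ] ℝ, ContDiffOn ℝ 1 f (Set.Icc 0 T) →
      ∀ (g : ℝ → Q →L[ℝ] ℝ) (u utld : ℝ → V) (p ptld : ℝ → Q),
        ContDiffOn ℝ 1 u (Set.Icc 0 T) → ContDiffOn ℝ 1 utld (Set.Icc 0 T) →
        ContDiffOn ℝ 1 (fun s => ι (p s)) (Set.Icc 0 T) →
        ContDiffOn ℝ 3 (fun s => ι (ptld s)) (Set.Icc (-(2 * τ)) T) →
        (∀ t ∈ Set.Icc (0 : ℝ) T, ∀ v : V, a (u t) v - d v (ι (p t)) = f t v) →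
        (∀ t ∈ Set.Icc (0 : ℝ) T, ∀ q : Q,
          d (derivWithin u (Set.Icc 0 T) t) (ι q)
            + c (derivWithin (fun s => ι (p s)) (Set.Icc 0 T) t) (ι q)
            + b (p t) q = g t q) →
        (∀ t ∈ Set.Icc (0 : ℝ) T, ∀ v : V,
          a (utld t) v - d v ((2 : ℝ) • ι (ptld (t - τ)) - ι (ptld (t - 2 * τ))) = f t v) →
        (∀ t ∈ Set.Icc (0 : ℝ) T, ∀ q : Q,
          d (derivWithin utld (Set.Icc 0 T) t) (ι q)
            + c (derivWithin (fun s => ι (ptld s)) (Set.Icc (-(2 * τ)) T) t) (ι q)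
            + b (ptld t) q = g t q) →
        ptld 0 = p 0 → (2 : ℝ) • ptld (-τ) - ptld (-(2 * τ)) = p 0 →
      ∀ M₂ M₃ : ℝ,
        (∀ s ∈ Set.Icc (-(2 * τ)) T,
          ‖iteratedDerivWithin 2 (fun s => ι (ptld s)) (Set.Icc (-(2 * τ)) T) s‖ ≤ M₂) →
        (∀ s ∈ Set.Icc (-(2 * τ)) T,
          ‖iteratedDerivWithin 3 (fun s => ι (ptld s)) (Set.Icc (-(2 * τ)) T) s‖ ≤ M₃) →
      ∀ t ∈ Set.Icc (0 : ℝ) T,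
        ‖ptld t - p t‖ ^ 2 + ‖utld t - u t‖ ^ 2 ≤ C * t * τ ^ 4 * (M₂ ^ 2 + M₃ ^ 2) := by
  refine ⟨36 * C_d ^ 2 / c_a * (1 / c_a + 1 / c_b) + 1, ?_, ?_⟩
  · have h1 : 0 ≤ 36 * C_d ^ 2 / c_a * (1 / c_a + 1 / c_b) := by positivity
    linarith
  intro V Q H _ _ _ _ _ _ _ _ _ ι hι a ha_symm ha_ell ha_bdd b hb_symm hb_ell hb_bdd
    c hc_symm hc_ell hc_bdd d hd_bdd τ T hτ hT f hf g u ut p pt hu hut hp hpt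
    heq_u heq_p heq_ut heq_pt hist1 hist2 M₂ M₃ hM₂ hM₃ t ht
  -- basic interval facts
  set I : Set ℝ := Set.Icc 0 T with hIdef
  set X : Set ℝ := Set.Icc (-(2 * τ)) T with hXdef
  have h2τ : -(2 * τ) < T := by linarith
  have hUI : UniqueDiffOn ℝ I := uniqueDiffOn_Icc hT
  have hUX : UniqueDiffOn ℝ X := uniqueDiffOn_Icc h2τ
  have hIX : I ⊆ X := Set.Icc_subset_Icc (by linarith) le_rfl
  have hm1 : ∀ {s : ℝ}, s ∈ I → s - τ ∈ X := by
    rintro s ⟨h1, h2⟩; exact ⟨by linarith, by linarith⟩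
  have hm2 : ∀ {s : ℝ}, s ∈ I → s - 2 * τ ∈ X := by
    rintro s ⟨h1, h2⟩; exact ⟨by linarith, by linarith⟩
  -- functions
  set x : ℝ → H := fun s => ι (pt s) with hxdef
  set xp : ℝ → H := fun s => ι (p s) with hxpdef
  set dx : ℝ → H := derivWithin x X with hdxdef
  set dxp : ℝ → H := derivWithin xp I with hdxpdef
  set du : ℝ → V := derivWithin u I with hdudef
  set dut : ℝ → V := derivWithin ut I with hdutdef
  set eu : ℝ → V := fun s => ut s - u s with heudef
  set ep : ℝ → Q := fun s => pt s - p s with hepdef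
  set hh : ℝ → H := fun s => x s - xp s with hhdef
  set eud : ℝ → V := fun s => dut s - du s with heuddef
  set hd : ℝ → H := fun s => dx s - dxp s with hddef
  set eta : ℝ → H := fun s => ((2:ℝ) • x (s - τ) - x (s - 2 * τ)) - x s with hetadef
  set etad : ℝ → H := fun s => ((2:ℝ) • dx (s - τ) - dx (s - 2 * τ)) - dx s with hetaddef
  -- differentiability
  have hder_x : ∀ s ∈ X, HasDerivWithinAt x (dx s) X s := by
    intro s hs
    exact ((hpt.differentiableOn (by norm_num)) s hs).hasDerivWithinAt
  have hder_xp : ∀ s ∈ I, HasDerivWithinAt xp (dxp s) I s := by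
    intro s hs
    exact ((hp.differentiableOn one_ne_zero) s hs).hasDerivWithinAt
  have hder_u : ∀ s ∈ I, HasDerivWithinAt u (du s) I s := by
    intro s hs
    exact ((hu.differentiableOn one_ne_zero) s hs).hasDerivWithinAt
  have hder_ut : ∀ s ∈ I, HasDerivWithinAt ut (dut s) I s := by
    intro s hs
    exact ((hut.differentiableOn one_ne_zero) s hs).hasDerivWithinAt
  have hder_hh : ∀ s ∈ I, HasDerivWithinAt hh (hd s) I s := by
    intro s hs
    exact ((hder_x s (hIX hs)).mono hIX).sub (hder_xp s hs)
  have hder_eu : ∀ s ∈ I, HasDerivWithinAt eu (eud s) I s := by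
    intro s hs
    exact (hder_ut s hs).sub (hder_u s hs)
  have hder_eta : ∀ s ∈ I, HasDerivWithinAt eta (etad s) I s := by
    intro s hs
    have h1 : HasDerivWithinAt (fun y => x (y - τ)) ((1:ℝ) • dx (s - τ)) I s := by
      have := HasDerivWithinAt.scomp (g₁ := x) (h := fun y => y - τ) s
        (hder_x _ (hm1 hs)) ((hasDerivWithinAt_id s I).sub_const τ) (fun y hy => hm1 hy)
      simpa [Function.comp_def] using this
    have h2 : HasDerivWithinAt (fun y => x (y - 2 * τ)) ((1:ℝ) • dx (s - 2 * τ)) I s := by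
      have := HasDerivWithinAt.scomp (g₁ := x) (h := fun y => y - 2 * τ) s
        (hder_x _ (hm2 hs)) ((hasDerivWithinAt_id s I).sub_const (2 * τ)) (fun y hy => hm2 hy)
      simpa [Function.comp_def] using this
    have h3 := ((h1.const_smul (2:ℝ)).sub h2).sub ((hder_x s (hIX hs)).mono hIX)
    simp only [one_smul] at h3
    exact h3
  -- continuity of the derivatives
  have hcont_dx : ContinuousOn dx X := hpt.continuousOn_derivWithin hUX (by norm_num)
  have hcont_eud : ContinuousOn eud I :=
    (hut.continuousOn_derivWithin hUI le_rfl).sub (hu.continuousOn_derivWithin hUI le_rfl)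
  have hcont_hd : ContinuousOn hd I :=
    (hcont_dx.mono hIX).sub (hp.continuousOn_derivWithin hUI le_rfl)
  -- identification of h with ι ∘ ep
  have hep_h : ∀ s : ℝ, hh s = ι (ep s) := by
    intro s; simp [hhdef, hepdef, hxdef, hxpdef, map_sub]
  -- error equations
  have E1 : ∀ s ∈ I, ∀ v : V, a (eu s) v = d v (hh s + eta s) := by
    intro s hs v
    have h1 := heq_u s hs v
    have h2 := heq_ut s hs v
    have ha' : a (eu s) v = a (ut s) v - a (u s) v := by
      simp [heudef, map_sub, LinearMap.sub_apply]
    have harg : hh s + eta s = ((2:ℝ) • ι (pt (s - τ)) - ι (pt (s - 2 * τ))) - ι (p s) := by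
      simp only [hhdef, hetadef, hxdef, hxpdef]
      module
    have hd' : d v (hh s + eta s)
        = d v ((2:ℝ) • ι (pt (s - τ)) - ι (pt (s - 2 * τ))) - d v (ι (p s)) := by
      rw [harg, map_sub]
    linarith
  have E2 : ∀ s ∈ I, ∀ q : Q,
      d (eud s) (ι q) + c (hd s) (ι q) + b (ep s) q = 0 := by
    intro s hs q
    have h1 := heq_p s hs q
    have h2 := heq_pt s hs q
    have e1 : d (eud s) (ι q) = d (dut s) (ι q) - d (du s) (ι q) := by
      simp [heuddef, map_sub, LinearMap.sub_apply]
    have e2 : c (hd s) (ι q) = c (dx s) (ι q) - c (dxp s) (ι q) := by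
      simp [hddef, map_sub, LinearMap.sub_apply]
    have e3 : b (ep s) q = b (pt s) q - b (p s) q := by
      simp [hepdef, map_sub, LinearMap.sub_apply]
    linarith
  have E3 : ∀ s ∈ I, ∀ v : V, a (eud s) v = d v (hd s + etad s) := by
    intro s hs v
    have hF1 : HasDerivWithinAt (fun y => a (eu y) v) (a (eud s) v) I s := by
      have := bilin_hasDerivWithinAt a ha_bdd (hder_eu s hs) (hasDerivWithinAt_const s I v)
      simpa using this
    have hF2 : HasDerivWithinAt (fun y => d v (hh y + eta y)) (d v (hd s + etad s)) I s := by
      have := bilin_hasDerivWithinAt d hd_bdd (hasDerivWithinAt_const s I v)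
        ((hder_hh s hs).add (hder_eta s hs))
      simpa using this
    have hF1' : HasDerivWithinAt (fun y => d v (hh y + eta y)) (a (eud s) v) I s :=
      hF1.congr (fun y hy => (E1 y hy v).symm) ((E1 s hs v).symm)
    have e1 := hF1'.derivWithin (hUI s hs)
    have e2 := hF2.derivWithin (hUI s hs)
    rw [← e1, ← e2]
  -- the quantity B(t) = b(e_p, e_p) and its derivative
  set Bf : ℝ → ℝ := fun s => b (ep s) (ep s) with hBfdef
  have hBderiv : ∀ s ∈ I, HasDerivWithinAt Bf
      (-(2 * d (eud s) (hd s)) - 2 * c (hd s) (hd s)) I s := by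
    intro t₀ h₀
    rw [hasDerivWithinAt_iff_tendsto_slope]
    have hkey : ∀ s ∈ I, Bf s - Bf t₀ =
        -(d (eud s + eud t₀) (hh s - hh t₀)) - c (hd s + hd t₀) (hh s - hh t₀) := by
      intro s hs
      have h1 := E2 s hs (ep s - ep t₀)
      have h2 := E2 t₀ h₀ (ep s - ep t₀)
      have hι : ι (ep s - ep t₀) = hh s - hh t₀ := by
        rw [map_sub, ← hep_h, ← hep_h]
      rw [hι] at h1 h2
      have hbs : b (ep s) (ep s - ep t₀) = b (ep s) (ep s) - b (ep s) (ep t₀) := by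
        simp [map_sub]
      have hbt : b (ep t₀) (ep s - ep t₀) = b (ep t₀) (ep s) - b (ep t₀) (ep t₀) := by
        simp [map_sub]
      have hsym := hb_symm (ep s) (ep t₀)
      have hda : d (eud s + eud t₀) (hh s - hh t₀)
          = d (eud s) (hh s - hh t₀) + d (eud t₀) (hh s - hh t₀) := by
        simp [map_add, LinearMap.add_apply]
      have hcc' : c (hd s + hd t₀) (hh s - hh t₀)
          = c (hd s) (hh s - hh t₀) + c (hd t₀) (hh s - hh t₀) := by
        simp [map_add, LinearMap.add_apply]
      simp only [hBfdef]
      linarith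
    have hslope : ∀ s ∈ I \ {t₀}, slope Bf t₀ s =
        -(d (eud s + eud t₀) ((s - t₀)⁻¹ • (hh s - hh t₀)))
          - c (hd s + hd t₀) ((s - t₀)⁻¹ • (hh s - hh t₀)) := by
      intro s hs
      rw [slope_def_field, hkey s hs.1]
      have hd1 : d (eud s + eud t₀) ((s - t₀)⁻¹ • (hh s - hh t₀))
          = (s - t₀)⁻¹ * d (eud s + eud t₀) (hh s - hh t₀) := by
        simp [map_smul]
      have hc1 : c (hd s + hd t₀) ((s - t₀)⁻¹ • (hh s - hh t₀))
          = (s - t₀)⁻¹ * c (hd s + hd t₀) (hh s - hh t₀) := by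
        simp [map_smul]
      rw [hd1, hc1]
      ring
    have hmono : (nhdsWithin t₀ (I \ {t₀})) ≤ nhdsWithin t₀ I :=
      nhdsWithin_mono t₀ Set.diff_subset
    have ht_eud : Filter.Tendsto (fun s => eud s + eud t₀) (nhdsWithin t₀ (I \ {t₀}))
        (nhds (eud t₀ + eud t₀)) :=
      (((hcont_eud t₀ h₀).mono_left hmono).add tendsto_const_nhds)
    have ht_hd : Filter.Tendsto (fun s => hd s + hd t₀) (nhdsWithin t₀ (I \ {t₀}))
        (nhds (hd t₀ + hd t₀)) :=
      (((hcont_hd t₀ h₀).mono_left hmono).add tendsto_const_nhds)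
    have ht_sh : Filter.Tendsto (fun s => (s - t₀)⁻¹ • (hh s - hh t₀))
        (nhdsWithin t₀ (I \ {t₀})) (nhds (hd t₀)) := by
      have h' := hder_hh t₀ h₀
      rw [hasDerivWithinAt_iff_tendsto_slope] at h'
      refine h'.congr (fun s => ?_)
      simp [slope_def_module, vsub_eq_sub]
    have htd := bilin_tendsto d hd_bdd ht_eud ht_sh
    have htc := bilin_tendsto c hc_bdd ht_hd ht_sh
    have hT' := (htd.neg).sub htc
    have hval : -(d (eud t₀ + eud t₀) (hd t₀)) - c (hd t₀ + hd t₀) (hd t₀)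
        = -(2 * d (eud t₀) (hd t₀)) - 2 * c (hd t₀) (hd t₀) := by
      simp [map_add, LinearMap.add_apply]; ring
    rw [← hval]
    refine hT'.congr' ?_
    filter_upwards [self_mem_nhdsWithin] with s hs
    exact (hslope s hs).symm
  -- energy and its derivative
  set Y : ℝ → ℝ := fun s => a (eu s) (eu s) + c (hh s) (hh s) + Bf s with hYdef
  set Yd : ℝ → ℝ := fun s =>
    (2 * d (eud s) (eta s) + 2 * d (eud s) (etad s)) - 2 * Bf s
      - 2 * a (eud s) (eud s) - 2 * c (hd s) (hd s) with hYddef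
  have hYderiv : ∀ s ∈ I, HasDerivWithinAt Y (Yd s) I s := by
    intro s hs
    have h1 := bilin_hasDerivWithinAt a ha_bdd (hder_eu s hs) (hder_eu s hs)
    have h2 := bilin_hasDerivWithinAt c hc_bdd (hder_hh s hs) (hder_hh s hs)
    have h3 := hBderiv s hs
    have hsum := (h1.add h2).add h3
    have hval : Yd s = a (eud s) (eu s) + a (eu s) (eud s)
        + (c (hd s) (hh s) + c (hh s) (hd s))
        + (-(2 * d (eud s) (hd s)) - 2 * c (hd s) (hd s)) := by
      have i1 : a (eu s) (eud s) = d (eud s) (hh s) + d (eud s) (eta s) := by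
        rw [E1 s hs (eud s), map_add]
      have i2 : a (eud s) (eu s) = a (eu s) (eud s) := ha_symm _ _
      have i3 : c (hh s) (hd s) = c (hd s) (hh s) := hc_symm _ _
      have i4 : d (eud s) (hh s) + c (hd s) (hh s) + Bf s = 0 := by
        have := E2 s hs (ep s)
        rw [← hep_h] at this
        simpa [hBfdef] using this
      have i5 : a (eud s) (eud s) = d (eud s) (hd s) + d (eud s) (etad s) := by
        rw [E3 s hs (eud s), map_add]
      simp only [hYddef]
      linarith
    rw [hval]
    exact hsum
  -- Taylor estimates on the extrapolation error
  have hx3 : ContDiffOn ℝ (((3:ℕ)):ℕ∞) x X := by exact_mod_cast hpt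
  have hEta : ∀ s ∈ I, ‖eta s‖ ≤ 6 * τ ^ 2 * M₂ := by
    intro s hs
    obtain ⟨hs0, hsT⟩ := hs
    have hab1 : s - 2 * τ < s - τ := by linarith
    have hab2 : s - 2 * τ < s := by linarith
    have hA1 : -(2 * τ) ≤ s - 2 * τ := by linarith
    have hE2 := taylor1 h2τ (by norm_num : 2 ≤ 3) hx3 hM₂ hA1 hab2 hsT
    have hE3 := taylor1 h2τ (by norm_num : 2 ≤ 3) hx3 hM₂ hA1 hab1
      (by linarith : s - τ ≤ T)
    rw [← hdxdef] at hE2 hE3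
    rw [show s - (s - 2 * τ) = 2 * τ by ring] at hE2
    rw [show s - τ - (s - 2 * τ) = τ by ring] at hE3
    have hid : eta s = (2:ℝ) • (x (s - τ) - x (s - 2 * τ) - τ • dx (s - 2 * τ))
        - (x s - x (s - 2 * τ) - (2 * τ) • dx (s - 2 * τ)) := by
      simp only [hetadef]; module
    rw [hid]
    calc ‖(2:ℝ) • (x (s - τ) - x (s - 2 * τ) - τ • dx (s - 2 * τ))
          - (x s - x (s - 2 * τ) - (2 * τ) • dx (s - 2 * τ))‖
        ≤ ‖(2:ℝ) • (x (s - τ) - x (s - 2 * τ) - τ • dx (s - 2 * τ))‖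
          + ‖x s - x (s - 2 * τ) - (2 * τ) • dx (s - 2 * τ)‖ := norm_sub_le _ _
      _ = 2 * ‖x (s - τ) - x (s - 2 * τ) - τ • dx (s - 2 * τ)‖
          + ‖x s - x (s - 2 * τ) - (2 * τ) • dx (s - 2 * τ)‖ := by
          rw [norm_smul]; norm_num
      _ ≤ 2 * (M₂ * τ ^ 2) + M₂ * (2 * τ) ^ 2 := by gcongr
      _ = 6 * τ ^ 2 * M₂ := by ring
  have hdx2 : ContDiffOn ℝ (((2:ℕ)):ℕ∞) dx X := by
    have h2 : ContDiffOn ℝ 2 (derivWithin x X) X := hpt.derivWithin hUX (by norm_num)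
    rw [← hdxdef] at h2
    exact_mod_cast h2
  have hM₃' : ∀ y ∈ X, ‖iteratedDerivWithin 2 dx X y‖ ≤ M₃ := by
    intro y hy
    have h3 : iteratedDerivWithin (2+1) x X y
        = iteratedDerivWithin 2 (derivWithin x X) X y := by rw [iteratedDerivWithin_succ']
    rw [hdxdef, ← h3]
    exact hM₃ y hy
  have hEtad : ∀ s ∈ I, ‖etad s‖ ≤ 6 * τ ^ 2 * M₃ := by
    intro s hs
    obtain ⟨hs0, hsT⟩ := hs
    have hab1 : s - 2 * τ < s - τ := by linarith
    have hab2 : s - 2 * τ < s := by linarith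
    have hA1 : -(2 * τ) ≤ s - 2 * τ := by linarith
    have hE2 := taylor1 h2τ (by norm_num : 2 ≤ 2) hdx2 hM₃' hA1 hab2 hsT
    have hE3 := taylor1 h2τ (by norm_num : 2 ≤ 2) hdx2 hM₃' hA1 hab1
      (by linarith : s - τ ≤ T)
    rw [show s - (s - 2 * τ) = 2 * τ by ring] at hE2
    rw [show s - τ - (s - 2 * τ) = τ by ring] at hE3
    have hid : etad s = (2:ℝ) • (dx (s - τ) - dx (s - 2 * τ)
          - τ • derivWithin dx X (s - 2 * τ))
        - (dx s - dx (s - 2 * τ) - (2 * τ) • derivWithin dx X (s - 2 * τ)) := by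
      simp only [hetaddef]; module
    rw [hid]
    calc ‖(2:ℝ) • (dx (s - τ) - dx (s - 2 * τ) - τ • derivWithin dx X (s - 2 * τ))
          - (dx s - dx (s - 2 * τ) - (2 * τ) • derivWithin dx X (s - 2 * τ))‖
        ≤ ‖(2:ℝ) • (dx (s - τ) - dx (s - 2 * τ) - τ • derivWithin dx X (s - 2 * τ))‖
          + ‖dx s - dx (s - 2 * τ) - (2 * τ) • derivWithin dx X (s - 2 * τ)‖ :=
          norm_sub_le _ _
      _ = 2 * ‖dx (s - τ) - dx (s - 2 * τ) - τ • derivWithin dx X (s - 2 * τ)‖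
          + ‖dx s - dx (s - 2 * τ) - (2 * τ) • derivWithin dx X (s - 2 * τ)‖ := by
          rw [norm_smul]; norm_num
      _ ≤ 2 * (M₃ * τ ^ 2) + M₃ * (2 * τ) ^ 2 := by gcongr
      _ = 6 * τ ^ 2 * M₃ := by ring
  -- derivative bound
  set g₀ : ℝ := 36 * C_d ^ 2 / c_a * (τ ^ 4 * (M₂ ^ 2 + M₃ ^ 2)) with hg₀def
  have hYd_le : ∀ s ∈ I, Yd s ≤ g₀ := by
    intro s hs
    have hB0 : 0 ≤ Bf s := le_trans (by positivity) (hb_ell (ep s))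
    have hC0 : 0 ≤ c (hd s) (hd s) := le_trans (by positivity) (hc_ell (hd s))
    have hA : c_a * ‖eud s‖ ^ 2 ≤ a (eud s) (eud s) := ha_ell _
    have hd1 : d (eud s) (eta s) ≤ C_d * ‖eud s‖ * ‖eta s‖ :=
      le_trans (le_abs_self _) (hd_bdd _ _)
    have hd2 : d (eud s) (etad s) ≤ C_d * ‖eud s‖ * ‖etad s‖ :=
      le_trans (le_abs_self _) (hd_bdd _ _)
    have he1 := hEta s hs
    have he2 := hEtad s hs
    set A : ℝ := ‖eud s‖ with hAdef
    set P : ℝ := ‖eta s‖ + ‖etad s‖ with hPdef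
    have hn1 : 0 ≤ A := norm_nonneg _
    have hnP : 0 ≤ P := by positivity
    have hP0 : P ≤ 6 * τ ^ 2 * M₂ + 6 * τ ^ 2 * M₃ := by simp only [hPdef]; linarith
    have step0 : Yd s ≤ 2 * (C_d * A * ‖eta s‖) + 2 * (C_d * A * ‖etad s‖)
        - 2 * (c_a * A ^ 2) := by
      simp only [hYddef]
      linarith
    have step0' : Yd s ≤ 2 * (C_d * A * P) - 2 * (c_a * A ^ 2) := by
      have : 2 * (C_d * A * ‖eta s‖) + 2 * (C_d * A * ‖etad s‖)
          = 2 * (C_d * A * P) := by simp only [hPdef]; ring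
      linarith
    have key1 : 2 * (C_d * A * P) - 2 * (c_a * A ^ 2) ≤ C_d ^ 2 * P ^ 2 / (2 * c_a) := by
      rw [le_div_iff₀ (by positivity)]
      nlinarith [sq_nonneg (C_d * P - 2 * c_a * A)]
    have key2 : C_d ^ 2 * P ^ 2 ≤ C_d ^ 2 * (6 * τ ^ 2 * M₂ + 6 * τ ^ 2 * M₃) ^ 2 := by
      have := pow_le_pow_left₀ hnP hP0 2
      exact mul_le_mul_of_nonneg_left this (sq_nonneg C_d)
    have key3 : C_d ^ 2 * (6 * τ ^ 2 * M₂ + 6 * τ ^ 2 * M₃) ^ 2 / (2 * c_a) ≤ g₀ := by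
      rw [hg₀def, div_le_iff₀ (by positivity)]
      have h72 : (6 * τ ^ 2 * M₂ + 6 * τ ^ 2 * M₃) ^ 2
          ≤ 72 * (τ ^ 4 * (M₂ ^ 2 + M₃ ^ 2)) := by
        nlinarith [sq_nonneg (τ ^ 2 * (M₂ - M₃))]
      have hfrac : 36 * C_d ^ 2 / c_a * (τ ^ 4 * (M₂ ^ 2 + M₃ ^ 2)) * (2 * c_a)
          = C_d ^ 2 * (72 * (τ ^ 4 * (M₂ ^ 2 + M₃ ^ 2))) := by
        field_simp
        ring
      rw [hfrac]
      exact mul_le_mul_of_nonneg_left h72 (sq_nonneg C_d)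
    have key4 : C_d ^ 2 * P ^ 2 / (2 * c_a)
        ≤ C_d ^ 2 * (6 * τ ^ 2 * M₂ + 6 * τ ^ 2 * M₃) ^ 2 / (2 * c_a) := by
      gcongr
    linarith
  -- Y vanishes at 0
  have h0I : (0:ℝ) ∈ I := Set.left_mem_Icc.2 hT.le
  have hY0 : Y 0 = 0 := by
    have hh0 : hh 0 = 0 := by simp [hhdef, hxdef, hxpdef, hist1]
    have hep0 : ep 0 = 0 := by simp [hepdef, hist1]
    have heta0 : eta 0 = 0 := by
      have e1 : (0:ℝ) - τ = -τ := by ring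
      have e2 : (0:ℝ) - 2 * τ = -(2 * τ) := by ring
      simp only [hetadef, e1, e2, hxdef]
      have hmap : (2:ℝ) • ι (pt (-τ)) - ι (pt (-(2 * τ)))
          = ι ((2:ℝ) • pt (-τ) - pt (-(2 * τ))) := by
        rw [map_sub, map_smul]
      rw [hmap, hist2, hist1]
      simp
    have heu0 : eu 0 = 0 := by
      have h := E1 0 h0I (eu 0)
      rw [hh0, heta0] at h
      simp only [add_zero, map_zero] at h
      have hc' := ha_ell (eu 0)
      have hsq : ‖eu 0‖ ^ 2 ≤ 0 := by nlinarith
      have h0' : ‖eu 0‖ ^ 2 = 0 := le_antisymm hsq (by positivity)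
      have hz : ‖eu 0‖ = 0 := by
        exact pow_eq_zero_iff (by norm_num : (2:ℕ) ≠ 0) |>.mp h0'
      exact norm_eq_zero.mp hz
    simp [hYdef, hBfdef, heu0, hh0, hep0]
  -- monotonicity: Y t ≤ g₀ * t
  have hYt : Y t ≤ g₀ * t := by
    set Z : ℝ → ℝ := fun s => g₀ * s - Y s with hZdef
    have hint : interior I = Set.Ioo 0 T := by rw [hIdef, interior_Icc]
    have hZat : ∀ s ∈ interior I, HasDerivAt Z (g₀ - Yd s) s := by
      intro s hs
      rw [hint] at hs
      have hsI : s ∈ I := by rw [hIdef]; exact Set.Ioo_subset_Icc_self hs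
      have hmem : I ∈ nhds s := by rw [hIdef]; exact Icc_mem_nhds hs.1 hs.2
      have hYat : HasDerivAt Y (Yd s) s := (hYderiv s hsI).hasDerivAt hmem
      have := ((hasDerivAt_id s).const_mul g₀).sub hYat
      rw [mul_one] at this
      exact this
    have hZcont : ContinuousOn Z I := by
      have hYcont : ContinuousOn Y I := fun s hs => (hYderiv s hs).continuousWithinAt
      exact (continuousOn_const.mul continuousOn_id).sub hYcont
    have hZdiff : DifferentiableOn ℝ Z (interior I) := fun s hs =>
      (hZat s hs).differentiableAt.differentiableWithinAt
    have hZnn : ∀ s ∈ interior I, 0 ≤ deriv Z s := by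
      intro s hs
      rw [(hZat s hs).deriv]
      have hsI : s ∈ I := by
        rw [hint] at hs; rw [hIdef]; exact Set.Ioo_subset_Icc_self hs
      linarith [hYd_le s hsI]
    have hconv : Convex ℝ I := by rw [hIdef]; exact convex_Icc 0 T
    have hmono := monotoneOn_of_deriv_nonneg hconv hZcont hZdiff hZnn
    have h01 := hmono h0I ht ht.1
    simp only [hZdef, hY0, mul_zero, sub_zero] at h01
    linarith
  -- conclusion
  have hBle : c_b * ‖ep t‖ ^ 2 ≤ Y t := by
    have h1 := hb_ell (ep t)
    have h2 : 0 ≤ a (eu t) (eu t) := le_trans (by positivity) (ha_ell _)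
    have h3 : 0 ≤ c (hh t) (hh t) := le_trans (by positivity) (hc_ell _)
    simp only [hYdef, hBfdef]
    linarith
  have hAle : c_a * ‖eu t‖ ^ 2 ≤ Y t := by
    have h1 := ha_ell (eu t)
    have h2 : 0 ≤ Bf t := le_trans (by positivity) (hb_ell (ep t))
    have h3 : 0 ≤ c (hh t) (hh t) := le_trans (by positivity) (hc_ell _)
    simp only [hYdef]
    linarith
  have e1 : c_b * ‖ep t‖ ^ 2 ≤ g₀ * t := le_trans hBle hYt
  have e2 : c_a * ‖eu t‖ ^ 2 ≤ g₀ * t := le_trans hAle hYt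
  have hX1 : ‖ep t‖ ^ 2 ≤ g₀ * t * (1 / c_b) := by
    rw [mul_one_div, le_div_iff₀ hcb]
    linarith
  have hX2 : ‖eu t‖ ^ 2 ≤ g₀ * t * (1 / c_a) := by
    rw [mul_one_div, le_div_iff₀ hca]
    linarith
  have htt : (0:ℝ) ≤ t := ht.1
  have httS : 0 ≤ t * τ ^ 4 * (M₂ ^ 2 + M₃ ^ 2) :=
    mul_nonneg (mul_nonneg htt (by positivity)) (by positivity)
  have hkey : g₀ * t * (1 / c_b) + g₀ * t * (1 / c_a)
      = 36 * C_d ^ 2 / c_a * (1 / c_a + 1 / c_b) * t * τ ^ 4 * (M₂ ^ 2 + M₃ ^ 2) := by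
    rw [hg₀def]; ring
  show ‖ep t‖ ^ 2 + ‖eu t‖ ^ 2 ≤ _
  calc ‖ep t‖ ^ 2 + ‖eu t‖ ^ 2 ≤ g₀ * t * (1 / c_b) + g₀ * t * (1 / c_a) := by linarith
    _ = 36 * C_d ^ 2 / c_a * (1 / c_a + 1 / c_b) * t * τ ^ 4 * (M₂ ^ 2 + M₃ ^ 2) := hkey
    _ ≤ (36 * C_d ^ 2 / c_a * (1 / c_a + 1 / c_b) + 1) * t * τ ^ 4 * (M₂ ^ 2 + M₃ ^ 2) := by
        nlinarith [httS]
end
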